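/- arXiv:2510.03145 — 6 statements merged into one kernel-verified Lean document; each statement's English description precedes it below -/
import Mathlib

section
/- If F is a free group and {A_α}_{α∈I} is a free factor system of F, then {A_α}_{α∈I} is a malnormal collection in F; that is, for all indices α, β ∈ I and every g ∈ F, if g⁻¹ A_α g ∩ A_β ≠ 1 then α = β and g ∈ A_α. -/
/-- A family of subgroups of `G` generates an internal free product if the canonical
homomorphism from their abstract free product (coproduct), induced by the inclusions,
is injective. -/
def IsInternalFreeProduct {G : Type*} [Group G] {ι : Type*} (H : ι → Subgroup G) : Prop :=
  Function.Injective (Monoid.CoprodI.lift (fun i => (H i).subtype))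

/-- `conjSub g A` is the conjugate subgroup `g A g⁻¹`. -/
def conjSub {G : Type*} [Group G] (g : G) (A : Subgroup G) : Subgroup G :=
  A.map (MulAut.conj g).toMonoidHom

/-- `A` is a free factor of `G` if there is a subgroup `K` such that `A` and `K`
generate an internal free product equal to `G`. -/
def IsFreeFactor {G : Type*} [Group G] (A : Subgroup G) : Prop :=
  ∃ K : Subgroup G,
    IsInternalFreeProduct (fun b : Bool => bif b then A else K) ∧ A ⊔ K = ⊤

/-- A collection of non-trivial subgroups of `G` is a free factor system if there are
elements `f i` such that the conjugates `(f i)⁻¹ * A i * (f i)` generate an internal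
free product which is a free factor of `G`. -/
def IsFreeFactorSystem {G : Type*} [Group G] {ι : Type*} (A : ι → Subgroup G) : Prop :=
  (∀ i, A i ≠ ⊥) ∧
  ∃ f : ι → G, IsInternalFreeProduct (fun i => conjSub (f i)⁻¹ (A i)) ∧
    IsFreeFactor (⨆ i, conjSub (f i)⁻¹ (A i))



open Monoid Monoid.CoprodI

namespace FFSproof

variable {κ : Type*} {G : κ → Type*} [∀ k, Group (G k)]

/-- The inverse of a reduced word: reverse the list and invert each letter. -/
def invWord (w : Word G) : Word G where
  toList := (w.toList.map fun l => ⟨l.1, l.2⁻¹⟩).reverse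
  ne_one := by
    intro l hl
    rw [List.mem_reverse, List.mem_map] at hl
    obtain ⟨a, ha, rfl⟩ := hl
    simpa using w.ne_one a ha
  chain_ne := by
    rw [List.isChain_reverse]
    refine (List.isChain_map _).2 ?_
    exact w.chain_ne.imp fun a b h => by
      simpa [Function.flip_def] using h.symm

theorem invWord_toList (w : Word G) :
    (invWord w).toList = (w.toList.map fun l => ⟨l.1, l.2⁻¹⟩).reverse := rfl

theorem prod_invWord (w : Word G) : (invWord w).prod = w.prod⁻¹ := by
  have h : List.map ((fun l => (of l.snd : CoprodI G)) ∘ fun l : Σ k, G k =>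
        (⟨l.fst, l.snd⁻¹⟩ : Σ k, G k)) w.toList
      = List.map ((fun x => x⁻¹) ∘ fun l : Σ k, G k => (of l.snd : CoprodI G)) w.toList := by
    apply List.map_congr_left; intro a _; simp
  rw [Word.prod, Word.prod, List.prod_inv_reverse, invWord_toList,
    List.map_reverse, List.map_map, List.map_map, h]

theorem fstIdx_invWord (w : Word G) :
    (invWord w).fstIdx = w.toList.getLast?.map Sigma.fst := by
  rw [Word.fstIdx, invWord_toList, List.head?_reverse, List.getLast?_map]
  cases h : w.toList.getLast? <;> simp

theorem length_invWord (w : Word G) :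
    (invWord w).toList.length = w.toList.length := by
  simp [invWord_toList]

theorem prod_injective [DecidableEq κ] [∀ k, DecidableEq (G k)] :
    Function.Injective (Word.prod : Word G → CoprodI G) :=
  (Word.equiv (M := G)).symm.injective

theorem of_eq_of {i j : κ} {x : G i} {y : G j} (hx : x ≠ 1)
    (h : (of x : CoprodI G) = of y) : i = j := by
  classical
  by_contra hij
  apply hx
  have h1 : x = CoprodI.lift (Pi.mulSingle i (MonoidHom.id (G i))) (of x) :=
    (of_leftInverse i x).symm
  rw [h, CoprodI.lift_of, Pi.mulSingle_eq_of_ne (Ne.symm hij)] at h1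
  simpa using h1

/-- Make a word from the tail of a word's list. -/
def tailWord (w : Word G) (a : Σ k, G k) (t : List (Σ k, G k))
    (hl : w.toList = a :: t) : Word G where
  toList := t
  ne_one := fun l hlt => w.ne_one l (by rw [hl]; exact List.mem_cons_of_mem _ hlt)
  chain_ne := by
    have := w.chain_ne
    rw [hl] at this
    exact this.tail

theorem prod_eq_head_mul_tail (w : Word G) (a : Σ k, G k) (t : List (Σ k, G k))
    (hl : w.toList = a :: t) :
    w.prod = of a.2 * (tailWord w a t hl).prod := by
  rw [Word.prod, Word.prod, hl]
  simp [tailWord]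


theorem key [DecidableEq κ] [∀ k, DecidableEq (G k)] :
    ∀ n : ℕ, ∀ (w : Word G) (i j : κ) (x : G i) (y : G j),
      w.toList.length = n → x ≠ 1 → y ≠ 1 →
      of x * w.prod = w.prod * of y →
      i = j ∧ w.prod ∈ (of : G i →* CoprodI G).range := by
  intro n
  induction n using Nat.strong_induction_on with
  | _ n ih =>
  intro w i j x y hlen hx hy heq
  rcases hl : w.toList with _ | ⟨⟨k, h⟩, t⟩
  · -- empty word: w.prod = 1
    have hw : w.prod = 1 := by rw [Word.prod, hl]; simp
    rw [hw, mul_one, one_mul] at heq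
    exact ⟨of_eq_of hx heq, hw ▸ one_mem _⟩
  · have hh1 : h ≠ 1 := w.ne_one ⟨k, h⟩ (by rw [hl]; exact List.mem_cons_self)
    by_cases hki : k = i
    · -- peel the first letter
      subst hki
      have hlen' : t.length < n := by rw [← hlen, hl]; simp
      have hpw : w.prod = of h * (tailWord w ⟨k, h⟩ t hl).prod :=
        prod_eq_head_mul_tail w _ _ hl
      have hx' : h⁻¹ * x * h ≠ 1 := by
        intro hc
        apply hx
        have hxx : x = h * (h⁻¹ * x * h) * h⁻¹ := by group
        rw [hc] at hxx; simpa using hxx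
      have h2 : of x * (of h * (tailWord w ⟨k, h⟩ t hl).prod)
          = (of h * (tailWord w ⟨k, h⟩ t hl).prod) * of y := by rw [← hpw]; exact heq
      have heq' : of (h⁻¹ * x * h) * (tailWord w ⟨k, h⟩ t hl).prod
          = (tailWord w ⟨k, h⟩ t hl).prod * of y := by
        calc of (h⁻¹ * x * h) * (tailWord w ⟨k, h⟩ t hl).prod
            = (of h)⁻¹ * (of x * (of h * (tailWord w ⟨k, h⟩ t hl).prod)) := by
              simp [map_mul, mul_assoc]
          _ = (of h)⁻¹ * ((of h * (tailWord w ⟨k, h⟩ t hl).prod) * of y) := by rw [h2]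
          _ = (tailWord w ⟨k, h⟩ t hl).prod * of y := by simp [mul_assoc]
      obtain ⟨hij, c, hc⟩ := ih t.length hlen' (tailWord w ⟨k, h⟩ t hl) k j _ y rfl hx' hy heq'
      exact ⟨hij, ⟨h * c, by rw [map_mul, hc, hpw]⟩⟩
    · -- first index differs from i
      have hfst : w.fstIdx ≠ some i := by
        rw [Word.fstIdx, hl]; simpa using hki
      have hvp : (invWord w).prod = w.prod⁻¹ := prod_invWord w
      by_cases hvj : (invWord w).fstIdx = some j
      · -- peel the last letter (first letter of the inverse word)
        rcases hvl : (invWord w).toList with _ | ⟨⟨j', h'⟩, t'⟩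
        · rw [Word.fstIdx, hvl] at hvj; simp at hvj
        · have hj' : j' = j := by
            rw [Word.fstIdx, hvl] at hvj; simpa using hvj
          subst hj'
          have hh' : h' ≠ 1 := (invWord w).ne_one _ (by rw [hvl]; exact List.mem_cons_self)
          have hlv : t'.length < n := by
            have hli := length_invWord w
            rw [hvl, hl] at hli
            rw [← hlen, hl]
            simp only [List.length_cons] at hli ⊢
            omega
          have hpv : (invWord w).prod = of h' * (tailWord (invWord w) ⟨j', h'⟩ t' hvl).prod :=
            prod_eq_head_mul_tail _ _ _ hvl
          have hinv : of y⁻¹ * w.prod⁻¹ = w.prod⁻¹ * of x⁻¹ := by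
            rw [map_inv, map_inv]
            have hcg := congrArg (fun z => z⁻¹) heq
            simpa [mul_inv_rev] using hcg.symm
          have h2 : of y⁻¹ * (of h' * (tailWord (invWord w) ⟨j', h'⟩ t' hvl).prod)
              = (of h' * (tailWord (invWord w) ⟨j', h'⟩ t' hvl).prod) * of x⁻¹ := by
            rw [← hpv, hvp]; exact hinv
          have hy' : h'⁻¹ * y⁻¹ * h' ≠ 1 := by
            intro hc
            apply hy
            have hyy : y⁻¹ = h' * (h'⁻¹ * y⁻¹ * h') * h'⁻¹ := by group
            rw [hc] at hyy
            simp only [mul_one, mul_inv_cancel] at hyy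
            rw [← inv_inv y, hyy, inv_one]
          have heq' : of (h'⁻¹ * y⁻¹ * h') * (tailWord (invWord w) ⟨j', h'⟩ t' hvl).prod
              = (tailWord (invWord w) ⟨j', h'⟩ t' hvl).prod * of x⁻¹ := by
            calc of (h'⁻¹ * y⁻¹ * h') * (tailWord (invWord w) ⟨j', h'⟩ t' hvl).prod
                = (of h')⁻¹ * (of y⁻¹ * (of h' * (tailWord (invWord w) ⟨j', h'⟩ t' hvl).prod)) := by
                  simp [map_mul, mul_assoc]
              _ = (of h')⁻¹ * ((of h' * (tailWord (invWord w) ⟨j', h'⟩ t' hvl).prod) * of x⁻¹) := by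
                  rw [h2]
              _ = (tailWord (invWord w) ⟨j', h'⟩ t' hvl).prod * of x⁻¹ := by simp [mul_assoc]
          obtain ⟨hji, c, hc⟩ := ih t'.length hlv (tailWord (invWord w) ⟨j', h'⟩ t' hvl)
            j' i _ x⁻¹ rfl hy' (inv_ne_one.2 hx) heq'
          subst hji
          refine ⟨rfl, ?_⟩
          have hw1 : w.prod⁻¹ = of (h' * c) := by rw [← hvp, hpv, ← hc, map_mul]
          have hw2 : w.prod = of ((h' * c)⁻¹) := by rw [map_inv, ← hw1, inv_inv]
          exact ⟨(h' * c)⁻¹, hw2.symm⟩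
      · -- neither end matches: contradiction
        exfalso
        have hW1 : (Word.cons x w hfst hx).prod = of x * w.prod := Word.prod_cons _ _ _ _ _
        have hW2 : (Word.cons y⁻¹ (invWord w) hvj (inv_ne_one.2 hy)).prod
            = of y⁻¹ * (invWord w).prod := Word.prod_cons _ _ _ _ _
        have hpe : (invWord (Word.cons x w hfst hx)).prod
            = (Word.cons y⁻¹ (invWord w) hvj (inv_ne_one.2 hy)).prod := by
          rw [prod_invWord, hW1, hW2, hvp, map_inv, heq, mul_inv_rev]
        have hEq : invWord (Word.cons x w hfst hx)
            = Word.cons y⁻¹ (invWord w) hvj (inv_ne_one.2 hy) := prod_injective hpe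
        have hgl : (Word.cons x w hfst hx).toList.getLast? = w.toList.getLast? := by
          show (⟨i, x⟩ :: w.toList).getLast? = w.toList.getLast?
          rw [hl, List.getLast?_cons_cons]
        have h1 : (invWord (Word.cons x w hfst hx)).fstIdx = (invWord w).fstIdx := by
          rw [fstIdx_invWord, fstIdx_invWord, hgl]
        rw [hEq, Word.fstIdx_cons] at h1
        exact hvj h1.symm

theorem conj_of_eq {i j : κ} {g : CoprodI G} {x : G i} {y : G j}
    (hx : x ≠ 1) (hy : y ≠ 1) (h : of x * g = g * of y) :
    i = j ∧ g ∈ (of : G i →* CoprodI G).range := by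
  classical
  have hg : (Word.equiv (M := G) g).prod = g := Word.equiv.symm_apply_apply g
  have := key (Word.equiv (M := G) g).toList.length (Word.equiv (M := G) g) i j x y
    rfl hx hy (by rw [hg]; exact h)
  rwa [hg] at this


section Glue

variable {F : Type*} [Group F] {ι : Type*}

/-- The combined family: the `B i` together with `K`. -/
def Cfam (B : ι → Subgroup F) (K : Subgroup F) : ι ⊕ Unit → Subgroup F
  | Sum.inl i => B i
  | Sum.inr _ => K

theorem glue (B : ι → Subgroup F) (K : Subgroup F)
    (hB : Function.Injective (CoprodI.lift fun i => (B i).subtype))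
    (hK : Function.Injective
      (CoprodI.lift fun b : Bool => ((bif b then (⨆ i, B i) else K) : Subgroup F).subtype))
    (hSK : (⨆ i, B i) ⊔ K = ⊤) (α β : ι) (h0 p q : F)
    (hp : p ∈ B α) (hq : q ∈ B β) (hp1 : p ≠ 1) (hq1 : q ≠ 1)
    (hcomm : p * h0 = h0 * q) :
    α = β ∧ h0 ∈ B α := by
  classical
  have hrange : (CoprodI.lift fun i => (B i).subtype).range = ⨆ i, B i := by
    rw [CoprodI.range_eq_iSup]
    simp [Subgroup.range_subtype]
  let e : CoprodI (fun i => ↥(B i)) ≃* ↥(⨆ i, B i) :=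
    (MonoidHom.ofInjective hB).trans (MulEquiv.subgroupCongr hrange)
  have he : ∀ (i : ι) (c : ↥(B i)), (e (CoprodI.of c) : F) = (c : F) := by
    intro i c
    simp [e, MonoidHom.ofInjective_apply, CoprodI.lift_of]
  let θ : CoprodI (fun s => ↥(Cfam B K s)) →*
      CoprodI (fun b : Bool => ↥((bif b then (⨆ i, B i) else K) : Subgroup F)) :=
    CoprodI.lift (fun s => match s with
      | Sum.inl i =>
        (CoprodI.of (M := fun b : Bool => ↥((bif b then (⨆ i, B i) else K) : Subgroup F))
          (i := true)).comp (Subgroup.inclusion (le_iSup B i))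
      | Sum.inr _ =>
        (CoprodI.of (M := fun b : Bool => ↥((bif b then (⨆ i, B i) else K) : Subgroup F))
          (i := false)))
  let ρ : CoprodI (fun b : Bool => ↥((bif b then (⨆ i, B i) else K) : Subgroup F)) →*
      CoprodI (fun s => ↥(Cfam B K s)) :=
    CoprodI.lift (fun b : Bool => match b with
      | true => (CoprodI.lift (fun i =>
          (CoprodI.of (M := fun s => ↥(Cfam B K s)) (i := Sum.inl i)))).comp e.symm.toMonoidHom
      | false => CoprodI.of (M := fun s => ↥(Cfam B K s)) (i := Sum.inr ()))
  have hρθ : ρ.comp θ = MonoidHom.id _ := by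
    apply CoprodI.ext_hom
    intro s
    ext c
    cases s with
    | inl i =>
      have hs : e.symm (Subgroup.inclusion (le_iSup B i) c)
          = CoprodI.of (M := fun i => ↥(B i)) (i := i) c := by
        rw [MulEquiv.symm_apply_eq]
        apply Subtype.ext
        rw [he i c]
        rfl
      show ρ (θ (CoprodI.of (M := fun s => ↥(Cfam B K s)) c))
        = CoprodI.of (M := fun s => ↥(Cfam B K s)) c
      rw [show θ (CoprodI.of (M := fun s => ↥(Cfam B K s)) c)
          = CoprodI.of (M := fun b : Bool => ↥((bif b then (⨆ i, B i) else K) : Subgroup F))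
            (i := true) ((Subgroup.inclusion (le_iSup B i)) c) from CoprodI.lift_of _ _]
      rw [show ρ (CoprodI.of (M := fun b : Bool =>
            ↥((bif b then (⨆ i, B i) else K) : Subgroup F)) (i := true)
            ((Subgroup.inclusion (le_iSup B i)) c))
          = (CoprodI.lift (fun i => (CoprodI.of (M := fun s => ↥(Cfam B K s))
            (i := Sum.inl i)))).comp e.symm.toMonoidHom
            ((Subgroup.inclusion (le_iSup B i)) c) from CoprodI.lift_of _ _]
      have hs2 : e.symm.toMonoidHom ((Subgroup.inclusion (le_iSup B i)) c)
          = CoprodI.of (M := fun i => ↥(B i)) (i := i) c := hs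
      show (CoprodI.lift (fun i => (CoprodI.of (M := fun s => ↥(Cfam B K s)) (i := Sum.inl i))))
        (e.symm.toMonoidHom ((Subgroup.inclusion (le_iSup B i)) c)) = _
      exact (congrArg _ hs2).trans (CoprodI.lift_of _ _)
    | inr u =>
      show ρ (θ (CoprodI.of (M := fun s => ↥(Cfam B K s)) c))
        = CoprodI.of (M := fun s => ↥(Cfam B K s)) c
      rw [show θ (CoprodI.of (M := fun s => ↥(Cfam B K s)) c) = CoprodI.of (M := fun b : Bool =>
          ↥((bif b then (⨆ i, B i) else K) : Subgroup F)) (i := false) c from CoprodI.lift_of _ _]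
      exact CoprodI.lift_of _ _
  have hθinj : Function.Injective θ :=
    Function.LeftInverse.injective (g := ρ) (fun a => DFunLike.congr_fun hρθ a)
  have hψθ : CoprodI.lift (fun s => (Cfam B K s).subtype)
      = (CoprodI.lift fun b : Bool =>
        ((bif b then (⨆ i, B i) else K) : Subgroup F).subtype).comp θ := by
    apply CoprodI.ext_hom
    intro s
    ext c
    cases s with
    | inl i =>
      show (Cfam B K (Sum.inl i)).subtype c
        = (CoprodI.lift fun b : Bool =>
            ((bif b then (⨆ i, B i) else K) : Subgroup F).subtype)
            (θ (CoprodI.of (M := fun s => ↥(Cfam B K s)) c))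
      rw [show θ (CoprodI.of (M := fun s => ↥(Cfam B K s)) c)
          = CoprodI.of (M := fun b : Bool => ↥((bif b then (⨆ i, B i) else K) : Subgroup F))
            (i := true) ((Subgroup.inclusion (le_iSup B i)) c) from CoprodI.lift_of _ _,
        CoprodI.lift_of]
      rfl
    | inr u =>
      show (Cfam B K (Sum.inr u)).subtype c
        = (CoprodI.lift fun b : Bool =>
            ((bif b then (⨆ i, B i) else K) : Subgroup F).subtype)
            (θ (CoprodI.of (M := fun s => ↥(Cfam B K s)) c))
      rw [show θ (CoprodI.of (M := fun s => ↥(Cfam B K s)) c) = CoprodI.of (M := fun b : Bool =>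
          ↥((bif b then (⨆ i, B i) else K) : Subgroup F)) (i := false) c from CoprodI.lift_of _ _]
      exact (CoprodI.lift_of (fi := fun b : Bool =>
        ((bif b then (⨆ i, B i) else K) : Subgroup F).subtype) (i := false) c).symm
  have hψinj : Function.Injective (CoprodI.lift (fun s => (Cfam B K s).subtype)) := by
    rw [hψθ]
    exact hK.comp hθinj
  have hψsurj : Function.Surjective (CoprodI.lift (fun s => (Cfam B K s).subtype)) := by
    rw [← MonoidHom.range_eq_top, CoprodI.range_eq_iSup]
    simp only [Subgroup.range_subtype]
    rw [iSup_sum]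
    have h1 : (⨆ i, Cfam B K (Sum.inl i)) = ⨆ i, B i := rfl
    have h2 : (⨆ u : Unit, Cfam B K (Sum.inr u)) = K := by
      simp [Cfam]
    rw [h1, h2, hSK]
  let Ψ : CoprodI (fun s => ↥(Cfam B K s)) ≃* F :=
    MulEquiv.ofBijective (CoprodI.lift (fun s => (Cfam B K s).subtype)) ⟨hψinj, hψsurj⟩
  have hΨ : ∀ a, Ψ a = (CoprodI.lift (fun s => (Cfam B K s).subtype)) a := fun a => rfl
  let x : ↥(Cfam B K (Sum.inl α)) := ⟨p, hp⟩
  let y : ↥(Cfam B K (Sum.inl β)) := ⟨q, hq⟩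
  have hx1 : x ≠ 1 := fun hh => hp1 (Subtype.ext_iff.1 hh)
  have hy1 : y ≠ 1 := fun hh => hq1 (Subtype.ext_iff.1 hh)
  have hofx : Ψ (CoprodI.of (M := fun s => ↥(Cfam B K s)) x) = p := by
    rw [hΨ, CoprodI.lift_of]; rfl
  have hofy : Ψ (CoprodI.of (M := fun s => ↥(Cfam B K s)) y) = q := by
    rw [hΨ, CoprodI.lift_of]; rfl
  have hucomm : CoprodI.of (M := fun s => ↥(Cfam B K s)) x * Ψ.symm h0
      = Ψ.symm h0 * CoprodI.of (M := fun s => ↥(Cfam B K s)) y := by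
    apply Ψ.injective
    rw [map_mul, map_mul, hofx, hofy, MulEquiv.apply_symm_apply]
    exact hcomm
  obtain ⟨hij, c, hc⟩ := conj_of_eq hx1 hy1 hucomm
  have hαβ : α = β := by injection hij
  refine ⟨hαβ, ?_⟩
  have hh0 : h0 = ((c : ↥(Cfam B K (Sum.inl α))) : F) := by
    have h1 : Ψ (Ψ.symm h0) = h0 := MulEquiv.apply_symm_apply Ψ h0
    rw [← hc, hΨ, CoprodI.lift_of] at h1
    exact h1.symm
  rw [hh0]
  exact (c : ↥(Cfam B K (Sum.inl α))).2

end Glue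

end FFSproof

/-- A free factor system of a free group is a malnormal collection: if a conjugate
`g⁻¹ A_α g` meets `A_β` non-trivially then `α = β` and `g ∈ A_α`. -/
theorem freeFactorSystem_isMalnormalCollection
    {F : Type*} [Group F] [IsFreeGroup F] {ι : Type*}
    (A : ι → Subgroup F) (hA : IsFreeFactorSystem A) :
    ∀ (α β : ι) (g : F), conjSub g⁻¹ (A α) ⊓ A β ≠ ⊥ → α = β ∧ g ∈ A α := by
  obtain ⟨hbot, f, hB, K, hK, hSK⟩ := hA
  intro α β g hne
  rw [Subgroup.ne_bot_iff_exists_ne_one] at hne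
  obtain ⟨⟨z, hz⟩, hz1⟩ := hne
  have hz1' : z ≠ 1 := fun h => hz1 (Subtype.ext h)
  obtain ⟨hzm, hzb⟩ := Subgroup.mem_inf.mp hz
  unfold conjSub at hzm
  rw [Subgroup.mem_map] at hzm
  obtain ⟨a, ha, hza⟩ := hzm
  have hza' : g⁻¹ * a * g = z := by simpa [MulAut.conj] using hza
  have ha1 : a ≠ 1 := by
    intro h
    apply hz1'
    rw [← hza', h, mul_one, inv_mul_cancel]
  have hp : (f α)⁻¹ * a * (f α) ∈ conjSub (f α)⁻¹ (A α) := by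
    unfold conjSub
    rw [Subgroup.mem_map]
    exact ⟨a, ha, by simp [MulAut.conj]⟩
  have hq : (f β)⁻¹ * z * (f β) ∈ conjSub (f β)⁻¹ (A β) := by
    unfold conjSub
    rw [Subgroup.mem_map]
    exact ⟨z, hzb, by simp [MulAut.conj]⟩
  have hp1 : (f α)⁻¹ * a * (f α) ≠ 1 := by
    intro h
    apply ha1
    have : a = (f α) * ((f α)⁻¹ * a * (f α)) * (f α)⁻¹ := by group
    rw [h] at this
    simpa using this
  have hq1 : (f β)⁻¹ * z * (f β) ≠ 1 := by
    intro h
    apply hz1'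
    have : z = (f β) * ((f β)⁻¹ * z * (f β)) * (f β)⁻¹ := by group
    rw [h] at this
    simpa using this
  have hcomm : ((f α)⁻¹ * a * (f α)) * ((f α)⁻¹ * g * (f β))
      = ((f α)⁻¹ * g * (f β)) * ((f β)⁻¹ * z * (f β)) := by
    rw [← hza']
    group
  obtain ⟨hαβ, hmem⟩ := FFSproof.glue (fun i => conjSub (f i)⁻¹ (A i)) K hB hK hSK
    α β ((f α)⁻¹ * g * (f β)) ((f α)⁻¹ * a * (f α)) ((f β)⁻¹ * z * (f β))
    hp hq hp1 hq1 hcomm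
  refine ⟨hαβ, ?_⟩
  subst hαβ
  unfold conjSub at hmem
  rw [Subgroup.mem_map] at hmem
  obtain ⟨a0, ha0, h0a⟩ := hmem
  have h0a' : (f α)⁻¹ * a0 * (f α) = (f α)⁻¹ * g * (f α) := by
    simpa [MulAut.conj] using h0a
  have hag : a0 = g := by
    have h1 := mul_right_cancel h0a'
    exact mul_left_cancel h1
  exact hag ▸ ha0
end

section
/- Let 𝔽 be a free group, ψ : 𝔽 → 𝔽 an injective homomorphism, and G = M(ψ) with stable letter t. Let H ≤ 𝔽 be a finitely generated subgroup, k ≥ 1 an integer, and f ∈ 𝔽 an element such that f⁻¹ ψ^k(H) f ≤ H. Then the subgroup ⟨H ∪ {t^k f}⟩ of G is isomorphic to the mapping torus M(φ), where φ : H → H is the injective endomorphism h ↦ f⁻¹ ψ^k(h) f; indeed the canonical homomorphism M(φ) → G restricting to the inclusion on H and sending the stable letter of M(φ) to t^k f is injective with image ⟨H ∪ {t^k f}⟩. -/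
/-- The mapping torus `M(ψ)` of an injective endomorphism `ψ` of `F`: the HNN extension
`⟨F, t ∣ t⁻¹ f t = ψ(f)⟩`, realised as the HNN extension of `F` with associated subgroups
`ψ(F)` and `F = ⊤` and identifying isomorphism induced by `ψ`. -/
noncomputable abbrev MappingTorus {F : Type*} [Group F] (ψ : F →* F)
    (hψ : Function.Injective ψ) : Type _ :=
  HNNExtension F ψ.range ⊤ ((MonoidHom.ofInjective hψ).symm.trans Subgroup.topEquiv.symm)

/-- The canonical embedding `F →* M(ψ)`. -/
noncomputable def MappingTorus.of {F : Type*} [Group F] (ψ : F →* F)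
    (hψ : Function.Injective ψ) : F →* MappingTorus ψ hψ :=
  HNNExtension.of

/-- The stable letter of `M(ψ)`; it satisfies `t⁻¹ * of f * t = of (ψ f)`. -/
noncomputable def MappingTorus.t {F : Type*} [Group F] (ψ : F →* F)
    (hψ : Function.Injective ψ) : MappingTorus ψ hψ :=
  HNNExtension.t

namespace MTAux

open HNNExtension

variable {F : Type*} [Group F] (χ : F →* F) (hχ : Function.Injective χ)

theorem of_mul_t (x : F) :
    MappingTorus.of χ hχ x * MappingTorus.t χ hχ =
      MappingTorus.t χ hχ * MappingTorus.of χ hχ (χ x) := by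
  have h := HNNExtension.equiv_symm_eq_conj
    (φ := (MonoidHom.ofInjective hχ).symm.trans Subgroup.topEquiv.symm)
    (⟨x, trivial⟩ : (⊤ : Subgroup F))
  have hcoe : ((((MonoidHom.ofInjective hχ).symm.trans Subgroup.topEquiv.symm).symm
      (⟨x, trivial⟩ : (⊤ : Subgroup F)) : χ.range) : F) = χ x := by
    simp [MulEquiv.symm_trans_apply]
    rfl
  rw [hcoe] at h
  show HNNExtension.of x * HNNExtension.t = HNNExtension.t * HNNExtension.of (χ x)
  rw [h]
  group

theorem of_mul_t_pow (x : F) (m : ℕ) :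
    MappingTorus.of χ hχ x * (MappingTorus.t χ hχ) ^ m =
      (MappingTorus.t χ hχ) ^ m * MappingTorus.of χ hχ ((⇑χ)^[m] x) := by
  induction m with
  | zero => simp
  | succ n ih =>
    rw [pow_succ, ← mul_assoc, ih, mul_assoc, of_mul_t χ hχ, Function.iterate_succ_apply',
      ← mul_assoc, ← pow_succ]

theorem inv_t_pow_mul_of (x : F) (m : ℕ) :
    ((MappingTorus.t χ hχ) ^ m)⁻¹ * MappingTorus.of χ hχ x =
      MappingTorus.of χ hχ ((⇑χ)^[m] x) * ((MappingTorus.t χ hχ) ^ m)⁻¹ := by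
  have h := of_mul_t_pow χ hχ x m
  calc ((MappingTorus.t χ hχ) ^ m)⁻¹ * MappingTorus.of χ hχ x
      = ((MappingTorus.t χ hχ) ^ m)⁻¹ * (MappingTorus.of χ hχ x *
          (MappingTorus.t χ hχ) ^ m) * ((MappingTorus.t χ hχ) ^ m)⁻¹ := by group
    _ = ((MappingTorus.t χ hχ) ^ m)⁻¹ * ((MappingTorus.t χ hχ) ^ m *
          MappingTorus.of χ hχ ((⇑χ)^[m] x)) * ((MappingTorus.t χ hχ) ^ m)⁻¹ := by rw [h]
    _ = MappingTorus.of χ hχ ((⇑χ)^[m] x) * ((MappingTorus.t χ hχ) ^ m)⁻¹ := by group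

/-- Normal form: every element of a mapping torus is `t^a * of x * t^(-b)`. -/
theorem exists_normal_form (g : MappingTorus χ hχ) :
    ∃ (a b : ℕ) (x : F),
      g = (MappingTorus.t χ hχ) ^ a * MappingTorus.of χ hχ x *
        ((MappingTorus.t χ hχ) ^ b)⁻¹ := by
  induction g using HNNExtension.induction_on with
  | of g => exact ⟨0, 0, g, by simp; rfl⟩
  | t => exact ⟨1, 0, 1, by simp [MappingTorus.t, MappingTorus.of]⟩
  | inv x ih =>
    obtain ⟨a, b, y, rfl⟩ := ih
    refine ⟨b, a, y⁻¹, ?_⟩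
    rw [map_inv]
    group
  | mul x y ihx ihy =>
    obtain ⟨a, b, u, rfl⟩ := ihx
    obtain ⟨c, d, v, rfl⟩ := ihy
    rcases le_total b c with h | h
    · obtain ⟨e, rfl⟩ := Nat.exists_eq_add_of_le h
      refine ⟨a + e, d, (⇑χ)^[e] u * v, ?_⟩
      have h1 := of_mul_t_pow χ hχ u e
      calc (MappingTorus.t χ hχ) ^ a * MappingTorus.of χ hχ u * ((MappingTorus.t χ hχ) ^ b)⁻¹ *
            ((MappingTorus.t χ hχ) ^ (b + e) * MappingTorus.of χ hχ v *
              ((MappingTorus.t χ hχ) ^ d)⁻¹)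
          = (MappingTorus.t χ hχ) ^ a * (MappingTorus.of χ hχ u * (MappingTorus.t χ hχ) ^ e) *
              MappingTorus.of χ hχ v * ((MappingTorus.t χ hχ) ^ d)⁻¹ := by
            rw [pow_add]; group
        _ = (MappingTorus.t χ hχ) ^ a * ((MappingTorus.t χ hχ) ^ e *
              MappingTorus.of χ hχ ((⇑χ)^[e] u)) * MappingTorus.of χ hχ v *
              ((MappingTorus.t χ hχ) ^ d)⁻¹ := by rw [h1]
        _ = (MappingTorus.t χ hχ) ^ (a + e) * MappingTorus.of χ hχ ((⇑χ)^[e] u * v) *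
              ((MappingTorus.t χ hχ) ^ d)⁻¹ := by rw [map_mul, pow_add]; group
    · obtain ⟨e, rfl⟩ := Nat.exists_eq_add_of_le h
      refine ⟨a, d + e, u * (⇑χ)^[e] v, ?_⟩
      have h2 := inv_t_pow_mul_of χ hχ v e
      calc (MappingTorus.t χ hχ) ^ a * MappingTorus.of χ hχ u *
            ((MappingTorus.t χ hχ) ^ (c + e))⁻¹ *
            ((MappingTorus.t χ hχ) ^ c * MappingTorus.of χ hχ v *
              ((MappingTorus.t χ hχ) ^ d)⁻¹)
          = (MappingTorus.t χ hχ) ^ a * MappingTorus.of χ hχ u *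
              (((MappingTorus.t χ hχ) ^ e)⁻¹ * MappingTorus.of χ hχ v) *
              ((MappingTorus.t χ hχ) ^ d)⁻¹ := by rw [pow_add]; group
        _ = (MappingTorus.t χ hχ) ^ a * MappingTorus.of χ hχ u *
              (MappingTorus.of χ hχ ((⇑χ)^[e] v) * ((MappingTorus.t χ hχ) ^ e)⁻¹) *
              ((MappingTorus.t χ hχ) ^ d)⁻¹ := by rw [h2]
        _ = (MappingTorus.t χ hχ) ^ a * MappingTorus.of χ hχ (u * (⇑χ)^[e] v) *
              ((MappingTorus.t χ hχ) ^ (d + e))⁻¹ := by rw [map_mul, pow_add]; group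

/-- The degree homomorphism to `ℤ`, sending `of x` to `0` and `t` to `1`. -/
noncomputable def deg : MappingTorus χ hχ →* Multiplicative ℤ :=
  HNNExtension.lift 1 (Multiplicative.ofAdd 1) (fun _ => by simp)

@[simp] theorem deg_of (x : F) : deg χ hχ (MappingTorus.of χ hχ x) = 1 := by
  simp [deg, MappingTorus.of]

@[simp] theorem deg_t : deg χ hχ (MappingTorus.t χ hχ) = Multiplicative.ofAdd 1 := by
  simp [deg, MappingTorus.t]

theorem mem_iterate_map {G : Type*} [Group G] (ψ : G →* G) (H : Subgroup G) (k : ℕ)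
    {x : G} (hx : x ∈ H) : (⇑ψ)^[k] x ∈ (Subgroup.map ψ)^[k] H := by
  induction k with
  | zero => simpa using hx
  | succ n ih =>
    rw [Function.iterate_succ_apply', Function.iterate_succ_apply']
    exact Subgroup.mem_map_of_mem ψ ih

end MTAux

/-- The endomorphism `h ↦ f⁻¹ ψᵏ(h) f` of `H`. -/
def mtPhi {𝔽 : Type*} [Group 𝔽] (ψ : 𝔽 →* 𝔽) (H : Subgroup 𝔽) (k : ℕ) (f : 𝔽)
    (hmem : ∀ h : ↥H, f⁻¹ * (⇑ψ)^[k] (h : 𝔽) * f ∈ H) : ↥H →* ↥H where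
  toFun h := ⟨f⁻¹ * (⇑ψ)^[k] (h : 𝔽) * f, hmem h⟩
  map_one' := by ext; simp
  map_mul' a b := by
    ext
    push_cast
    rw [iterate_map_mul]
    group

/-- Sub-mapping tori: if `H ≤ 𝔽` is finitely generated, `k ≥ 1` and `f ∈ 𝔽` satisfy
`f⁻¹ ψᵏ(H) f ≤ H`, then `⟨H, tᵏf⟩ ≤ M(ψ)` is isomorphic to the mapping torus `M(φ)` of
`φ : H → H`, `h ↦ f⁻¹ ψᵏ(h) f`, via the canonical homomorphism restricting to the
inclusion on `H` and sending the stable letter to `tᵏ f`. -/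
theorem submappingTorus_of_invariant
    {𝔽 : Type*} [Group 𝔽] [IsFreeGroup 𝔽] (ψ : 𝔽 →* 𝔽) (hψ : Function.Injective ψ)
    (H : Subgroup 𝔽) (hHfg : H.FG) (k : ℕ) (hk : 1 ≤ k) (f : 𝔽)
    (hinv : conjSub f⁻¹ ((Subgroup.map ψ)^[k] H) ≤ H) :
    ∃ φ : ↥H →* ↥H,
      (∀ h : ↥H, (φ h : 𝔽) = f⁻¹ * (⇑ψ)^[k] (h : 𝔽) * f) ∧
      ∃ (hφ : Function.Injective φ)
        (θ : MappingTorus φ hφ →* MappingTorus ψ hψ),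
        (∀ h : ↥H, θ (MappingTorus.of φ hφ h) = MappingTorus.of ψ hψ (h : 𝔽)) ∧
        θ (MappingTorus.t φ hφ) = (MappingTorus.t ψ hψ) ^ k * MappingTorus.of ψ hψ f ∧
        Function.Injective θ ∧
        θ.range = Subgroup.closure ((MappingTorus.of ψ hψ) '' (H : Set 𝔽) ∪
          {(MappingTorus.t ψ hψ) ^ k * MappingTorus.of ψ hψ f}) := by
  classical
  -- the endomorphism φ of H
  have hmem : ∀ h : ↥H, f⁻¹ * (⇑ψ)^[k] (h : 𝔽) * f ∈ H := by
    intro h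
    apply hinv
    refine ⟨(⇑ψ)^[k] (h : 𝔽), MTAux.mem_iterate_map ψ H k h.2, ?_⟩
    simp [MulAut.conj]
  have hφ : Function.Injective (mtPhi ψ H k f hmem) := by
    intro a b hab
    have h1 : f⁻¹ * (⇑ψ)^[k] (a : 𝔽) * f = f⁻¹ * (⇑ψ)^[k] (b : 𝔽) * f :=
      congrArg Subtype.val hab
    have h2 : (⇑ψ)^[k] (a : 𝔽) = (⇑ψ)^[k] (b : 𝔽) := by
      have := mul_right_cancel h1
      exact mul_left_cancel this
    exact Subtype.ext (hψ.iterate k h2)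
  refine ⟨mtPhi ψ H k f hmem, fun h => rfl, hφ, ?_⟩
  set φ : ↥H →* ↥H := mtPhi ψ H k f hmem with hφdef
  set T : MappingTorus ψ hψ := (MappingTorus.t ψ hψ) ^ k * MappingTorus.of ψ hψ f with hT
  have hx : ∀ a : φ.range, T * ((MappingTorus.of ψ hψ).comp H.subtype) (a : ↥H) =
      ((MappingTorus.of ψ hψ).comp H.subtype)
        ((((MonoidHom.ofInjective hφ).symm.trans Subgroup.topEquiv.symm) a :
          (⊤ : Subgroup ↥H)) : ↥H) * T := by
    intro a
    set b : ↥H := (MonoidHom.ofInjective hφ).symm a with hb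
    have hcoe1 : ((((MonoidHom.ofInjective hφ).symm.trans Subgroup.topEquiv.symm) a :
        (⊤ : Subgroup ↥H)) : ↥H) = b := rfl
    have hcoe2 : ((a : ↥H) : 𝔽) = f⁻¹ * (⇑ψ)^[k] (b : 𝔽) * f := by
      have h3 : φ b = (a : ↥H) := MonoidHom.apply_ofInjective_symm hφ a
      rw [← h3]
      rfl
    rw [hcoe1]
    show T * MappingTorus.of ψ hψ ((a : ↥H) : 𝔽) = MappingTorus.of ψ hψ (b : 𝔽) * T
    rw [hcoe2, hT]
    have harg : f * (f⁻¹ * (⇑ψ)^[k] (b : 𝔽) * f) = (⇑ψ)^[k] (b : 𝔽) * f := by group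
    calc (MappingTorus.t ψ hψ) ^ k * MappingTorus.of ψ hψ f *
          MappingTorus.of ψ hψ (f⁻¹ * (⇑ψ)^[k] (b : 𝔽) * f)
        = (MappingTorus.t ψ hψ) ^ k * MappingTorus.of ψ hψ ((⇑ψ)^[k] (b : 𝔽)) *
            MappingTorus.of ψ hψ f := by rw [mul_assoc, ← map_mul, harg, map_mul, ← mul_assoc]
      _ = MappingTorus.of ψ hψ (b : 𝔽) *
            ((MappingTorus.t ψ hψ) ^ k * MappingTorus.of ψ hψ f) := by
            rw [← MTAux.of_mul_t_pow ψ hψ (b : 𝔽) k]; group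
  set θ : MappingTorus φ hφ →* MappingTorus ψ hψ :=
    HNNExtension.lift ((MappingTorus.of ψ hψ).comp H.subtype) T hx with hθdef
  have hθof : ∀ h : ↥H, θ (MappingTorus.of φ hφ h) = MappingTorus.of ψ hψ (h : 𝔽) := by
    intro h
    show θ (HNNExtension.of h) = _
    rw [hθdef, HNNExtension.lift_of]
    rfl
  have hθt : θ (MappingTorus.t φ hφ) = T := by
    show θ HNNExtension.t = T
    rw [hθdef, HNNExtension.lift_t]
  have hofinj : Function.Injective (MappingTorus.of ψ hψ) := HNNExtension.of_injective _
  have hinj : Function.Injective θ := by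
    rw [injective_iff_map_eq_one]
    intro g hg
    obtain ⟨a, b, x, rfl⟩ := MTAux.exists_normal_form φ hφ g
    have himg : θ ((MappingTorus.t φ hφ) ^ a * MappingTorus.of φ hφ x *
        ((MappingTorus.t φ hφ) ^ b)⁻¹) = T ^ a * MappingTorus.of ψ hψ (x : 𝔽) * (T ^ b)⁻¹ := by
      rw [map_mul, map_mul, map_inv, map_pow, map_pow, hθt, hθof]
    rw [himg] at hg
    have hdegT : MTAux.deg ψ hψ T = Multiplicative.ofAdd (k : ℤ) := by
      rw [hT, map_mul, map_pow, MTAux.deg_t, MTAux.deg_of, mul_one, ← ofAdd_nsmul]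
      simp
    have hdeg : Multiplicative.ofAdd ((k : ℤ) * a - (k : ℤ) * b) = 1 := by
      have := congrArg (MTAux.deg ψ hψ) hg
      rw [map_mul, map_mul, map_inv, map_pow, map_pow, hdegT, MTAux.deg_of, map_one] at this
      rw [← this, mul_one, ← ofAdd_nsmul, ← ofAdd_nsmul, ← ofAdd_neg, ← ofAdd_add]
      congr 1
      push_cast
      ring
    have hab : a = b := by
      have h4 : (k : ℤ) * a - (k : ℤ) * b = 0 := by
        have h4' := congrArg Multiplicative.toAdd hdeg
        rwa [toAdd_ofAdd, toAdd_one] at h4'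
      have hk' : (k : ℤ) ≠ 0 := by
        exact_mod_cast Nat.one_le_iff_ne_zero.mp hk
      have h5' : (k : ℤ) * ((a : ℤ) - b) = 0 := by linear_combination h4
      have h5 : (a : ℤ) = b := by
        rcases mul_eq_zero.mp h5' with h | h
        · exact absurd h hk'
        · linarith
      exact_mod_cast h5
    subst hab
    have hx1 : MappingTorus.of ψ hψ (x : 𝔽) = 1 := by
      have h6 : T ^ a * MappingTorus.of ψ hψ (x : 𝔽) * (T ^ a)⁻¹ = 1 := hg
      have h7 : MappingTorus.of ψ hψ (x : 𝔽) = (T ^ a)⁻¹ * 1 * T ^ a := by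
        rw [← h6]; group
      rw [h7]; group
    have hx2 : (x : 𝔽) = 1 := by
      apply hofinj
      rw [hx1, map_one]
    have hx3 : x = 1 := Subtype.ext hx2
    rw [hx3, map_one]
    group
  refine ⟨θ, hθof, hθt, hinj, ?_⟩
  apply le_antisymm
  · rintro y ⟨g, rfl⟩
    induction g using HNNExtension.induction_on with
    | of g =>
      have hg : θ (HNNExtension.of g) = MappingTorus.of ψ hψ (g : 𝔽) := hθof g
      rw [hg]
      exact Subgroup.subset_closure (Or.inl ⟨(g : 𝔽), g.2, rfl⟩)
    | t =>
      have hg : θ HNNExtension.t = T := hθt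
      rw [hg]
      exact Subgroup.subset_closure (Or.inr rfl)
    | mul x y ihx ihy => rw [map_mul]; exact mul_mem ihx ihy
    | inv x ih => rw [map_inv]; exact inv_mem ih
  · rw [Subgroup.closure_le]
    rintro y (⟨h, hh, rfl⟩ | hy)
    · exact ⟨MappingTorus.of φ hφ ⟨h, hh⟩, hθof ⟨h, hh⟩⟩
    · rw [Set.mem_singleton_iff] at hy
      subst hy
      exact ⟨MappingTorus.t φ hφ, hθt⟩
end

section
/- Let 𝔽 be a free group, and let A and (C_i)_{i≥0} be subgroups of 𝔽 generating an internal free product with 𝔽 = A ⋆ (⋆_{i≥0} C_i). Let ψ : 𝔽 → 𝔽 be an injective homomorphism with ψ(C_i) = C_{i+1} for all i ≥ 0, and let m ≥ 0 be an integer such that ψ(A) ≤ F := A ⋆ (⋆_{i=0}^m C_i). Set L = A ⋆ (⋆_{i=0}^{m−1} C_i), set U = ψ(L) ≤ F, and let φ : L → U be the isomorphism obtained by restricting ψ. Then the canonical homomorphism from the HNN extension F∗_φ (of F with associated subgroups L and U and identifying isomorphism φ) to M(ψ), restricting to the inclusion F ≤ 𝔽 and sending stable letter to stable letter, is an isomorphism.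 -/
open Subgroup

section Aux

variable {𝔽 : Type*} [Group 𝔽] {ψ : 𝔽 →* 𝔽} {F L : Subgroup 𝔽}

/-- conjugation relations in the mapping torus -/
theorem MappingTorus.t_conj (ψ : 𝔽 →* 𝔽) (hψ : Function.Injective ψ) (f : 𝔽) :
    MappingTorus.t ψ hψ * MappingTorus.of ψ hψ (ψ f) =
      MappingTorus.of ψ hψ f * MappingTorus.t ψ hψ := by
  have h := HNNExtension.t_mul_of
    (φ := (MonoidHom.ofInjective hψ).symm.trans Subgroup.topEquiv.symm)
    (⟨ψ f, ⟨f, rfl⟩⟩ : ψ.range)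
  have h2 : ((((MonoidHom.ofInjective hψ).symm.trans Subgroup.topEquiv.symm)
      (⟨ψ f, ⟨f, rfl⟩⟩ : ψ.range) : (⊤ : Subgroup 𝔽)) : 𝔽) = f := by
    show ((MonoidHom.ofInjective hψ).symm ⟨ψ f, ⟨f, rfl⟩⟩ : 𝔽) = f
    apply hψ
    rw [MonoidHom.apply_ofInjective_symm]
  rw [h2] at h
  exact h

theorem MappingTorus.inv_t_conj (ψ : 𝔽 →* 𝔽) (hψ : Function.Injective ψ) (f : 𝔽) :
    (MappingTorus.t ψ hψ)⁻¹ * MappingTorus.of ψ hψ f * MappingTorus.t ψ hψ =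
      MappingTorus.of ψ hψ (ψ f) := by
  have h := MappingTorus.t_conj ψ hψ f
  rw [mul_assoc, ← h]
  group

/-- The identifying isomorphism `φ : U ≃* L`. -/
noncomputable def eIso (hψ : Function.Injective ψ) (hU : L.map ψ ≤ F) (hLF : L ≤ F) :
    ((L.map ψ).subgroupOf F) ≃* (L.subgroupOf F) :=
  (subgroupOfEquivOfLe hU).trans ((L.equivMapOfInjective ψ hψ).symm.trans
    (subgroupOfEquivOfLe hLF).symm)

theorem eIso_spec (hψ : Function.Injective ψ) (hU : L.map ψ ≤ F) (hLF : L ≤ F)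
    (x : (L.map ψ).subgroupOf F) : ψ ((eIso hψ hU hLF x : F) : 𝔽) = ((x : F) : 𝔽) := by
  show ψ (((subgroupOfEquivOfLe hLF).symm ((L.equivMapOfInjective ψ hψ).symm
      (subgroupOfEquivOfLe hU x)) : F) : 𝔽) = _
  have h2 : ψ (((L.equivMapOfInjective ψ hψ).symm (subgroupOfEquivOfLe hU x) : L) : 𝔽) =
      ((subgroupOfEquivOfLe hU x : L.map ψ) : 𝔽) := by
    rw [← coe_equivMapOfInjective_apply L ψ hψ, MulEquiv.apply_symm_apply]
  exact h2

variable {A : Subgroup 𝔽} {C : ℕ → Subgroup 𝔽} {m : ℕ}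

noncomputable def stepIso (hψ : Function.Injective ψ) (hC : ∀ i : ℕ, (C i).map ψ = C (i + 1))
    (i : ℕ) : C i ≃* C (i + 1) :=
  ((C i).equivMapOfInjective ψ hψ).trans (MulEquiv.subgroupCongr (hC i))

theorem stepIso_coe (hψ : Function.Injective ψ) (hC : ∀ i : ℕ, (C i).map ψ = C (i + 1))
    (i : ℕ) (x : C i) : (stepIso hψ hC i x : 𝔽) = ψ x := rfl

theorem stepIso_symm_coe (hψ : Function.Injective ψ) (hC : ∀ i : ℕ, (C i).map ψ = C (i + 1))
    (i : ℕ) (x : C (i + 1)) : ψ ((stepIso hψ hC i).symm x : 𝔽) = (x : 𝔽) := by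
  rw [← stepIso_coe hψ hC i, MulEquiv.apply_symm_apply]

theorem hAF' (hF : F = A ⊔ ⨆ i : Fin (m + 1), C (i : ℕ)) : A ≤ F := hF ▸ le_sup_left

theorem hCF' (hF : F = A ⊔ ⨆ i : Fin (m + 1), C (i : ℕ)) {i : ℕ} (hi : i ≤ m) : C i ≤ F := by
  subst hF
  exact le_trans (le_iSup (fun j : Fin (m+1) => C (j : ℕ)) ⟨i, Nat.lt_succ_of_le hi⟩) le_sup_right

theorem hAL' (hL : L = A ⊔ ⨆ i : Fin m, C (i : ℕ)) : A ≤ L := hL ▸ le_sup_left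

theorem hCL' (hL : L = A ⊔ ⨆ i : Fin m, C (i : ℕ)) {i : ℕ} (hi : i < m) : C i ≤ L := by
  subst hL
  exact le_trans (le_iSup (fun j : Fin m => C (j : ℕ)) ⟨i, hi⟩) le_sup_right

theorem hLF' (hF : F = A ⊔ ⨆ i : Fin (m + 1), C (i : ℕ))
    (hL : L = A ⊔ ⨆ i : Fin m, C (i : ℕ)) : L ≤ F := by
  subst hL
  exact sup_le (hAF' hF) (iSup_le fun j => hCF' hF (Nat.le_of_lt j.2))

theorem hUF' (hC : ∀ i : ℕ, (C i).map ψ = C (i + 1))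
    (hF : F = A ⊔ ⨆ i : Fin (m + 1), C (i : ℕ))
    (hL : L = A ⊔ ⨆ i : Fin m, C (i : ℕ)) (hA : A.map ψ ≤ F) : L.map ψ ≤ F := by
  subst hL
  rw [Subgroup.map_sup, Subgroup.map_iSup]
  refine sup_le hA (iSup_le fun j => ?_)
  rw [hC]
  exact hCF' hF j.2

noncomputable def chi (hψ : Function.Injective ψ) (hC : ∀ i : ℕ, (C i).map ψ = C (i + 1))
    (hF : F = A ⊔ ⨆ i : Fin (m + 1), C (i : ℕ)) (hU : L.map ψ ≤ F) (hLF : L ≤ F) :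
    ∀ i : ℕ, C i →*
      HNNExtension F ((L.map ψ).subgroupOf F) (L.subgroupOf F) (eIso hψ hU hLF)
  | 0 => HNNExtension.of.comp (inclusion (hCF' hF (Nat.zero_le m)))
  | (i+1) => (MulAut.conj (HNNExtension.t)⁻¹).toMonoidHom.comp
      ((chi hψ hC hF hU hLF i).comp ((stepIso hψ hC i).symm.toMonoidHom))

theorem chi_succ (hψ : Function.Injective ψ) (hC : ∀ i : ℕ, (C i).map ψ = C (i + 1))
    (hF : F = A ⊔ ⨆ i : Fin (m + 1), C (i : ℕ)) (hU : L.map ψ ≤ F) (hLF : L ≤ F)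
    (i : ℕ) (c : C (i+1)) :
    chi hψ hC hF hU hLF (i+1) c =
      HNNExtension.t⁻¹ * chi hψ hC hF hU hLF i ((stepIso hψ hC i).symm c) * HNNExtension.t := by
  simp [chi, MulAut.conj, mul_assoc]

theorem chi_le (hψ : Function.Injective ψ) (hC : ∀ i : ℕ, (C i).map ψ = C (i + 1))
    (hF : F = A ⊔ ⨆ i : Fin (m + 1), C (i : ℕ))
    (hL : L = A ⊔ ⨆ i : Fin m, C (i : ℕ)) (hU : L.map ψ ≤ F) (hLF : L ≤ F) :
    ∀ i : ℕ, (hi : i ≤ m) → ∀ c : C i,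
      chi hψ hC hF hU hLF i c = HNNExtension.of ⟨(c : 𝔽), hCF' hF hi c.2⟩
  | 0, _, c => rfl
  | (i+1), hi, c => by
    have hi' : i < m := hi
    set c' : C i := (stepIso hψ hC i).symm c with hc'
    have hmem : (⟨(c' : 𝔽), hCF' hF (le_of_lt hi') c'.2⟩ : F) ∈ L.subgroupOf F := by
      rw [mem_subgroupOf]
      exact hCL' hL hi' c'.2
    set b : L.subgroupOf F := ⟨⟨(c' : 𝔽), hCF' hF (le_of_lt hi') c'.2⟩, hmem⟩ with hb
    have key : chi hψ hC hF hU hLF (i+1) c =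
        HNNExtension.t⁻¹ * HNNExtension.of ((b : F)) * HNNExtension.t := by
      rw [chi_succ, chi_le hψ hC hF hL hU hLF i (le_of_lt hi') c']
    rw [key, ← HNNExtension.equiv_symm_eq_conj (φ := eIso hψ hU hLF)]
    congr 1
    apply Subtype.ext
    show (((eIso hψ hU hLF).symm b : F) : 𝔽) = (c : 𝔽)
    have hspec := eIso_spec hψ hU hLF ((eIso hψ hU hLF).symm b)
    rw [MulEquiv.apply_symm_apply] at hspec
    rw [← hspec]
    show ψ ((c' : 𝔽)) = _
    exact stepIso_symm_coe hψ hC i c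

/-- the free-product decomposition of `𝔽` as a `MulEquiv` -/
noncomputable def bigIso
    (hfp : Function.Injective
      (Monoid.CoprodI.lift (fun o : Option ℕ => (o.elim A C).subtype)))
    (htop : A ⊔ (⨆ i : ℕ, C i) = ⊤) :
    Monoid.CoprodI (fun o : Option ℕ => ↥(o.elim A C)) ≃* 𝔽 :=
  MulEquiv.ofBijective (Monoid.CoprodI.lift (fun o : Option ℕ => (o.elim A C).subtype))
    ⟨hfp, by
      rw [← MonoidHom.range_eq_top, Monoid.CoprodI.range_eq_iSup]
      simp only [Subgroup.range_subtype]
      rw [iSup_option]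
      exact htop⟩

theorem bigIso_symm_of
    (hfp : Function.Injective
      (Monoid.CoprodI.lift (fun o : Option ℕ => (o.elim A C).subtype)))
    (htop : A ⊔ (⨆ i : ℕ, C i) = ⊤) (o : Option ℕ) (x : ↥(o.elim A C)) :
    (bigIso hfp htop).symm ((x : 𝔽)) =
      Monoid.CoprodI.of (M := fun o : Option ℕ => ↥(o.elim A C)) (i := o) x := by
  rw [MulEquiv.symm_apply_eq]
  exact (Monoid.CoprodI.lift_of (fun o : Option ℕ => (o.elim A C).subtype) x).symm

/-- the homomorphism `ρ : 𝔽 →* H` -/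
noncomputable def rho (hψ : Function.Injective ψ) (hC : ∀ i : ℕ, (C i).map ψ = C (i + 1))
    (hF : F = A ⊔ ⨆ i : Fin (m + 1), C (i : ℕ)) (hU : L.map ψ ≤ F) (hLF : L ≤ F)
    (hfp : Function.Injective
      (Monoid.CoprodI.lift (fun o : Option ℕ => (o.elim A C).subtype)))
    (htop : A ⊔ (⨆ i : ℕ, C i) = ⊤) :
    𝔽 →* HNNExtension F ((L.map ψ).subgroupOf F) (L.subgroupOf F) (eIso hψ hU hLF) :=
  (Monoid.CoprodI.lift (fun o : Option ℕ =>
    (Option.rec (HNNExtension.of.comp (inclusion (hAF' hF)))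
      (fun i => chi hψ hC hF hU hLF i) o : ↥(o.elim A C) →* _))).comp
    (bigIso hfp htop).symm.toMonoidHom

theorem rho_A (hψ : Function.Injective ψ) (hC : ∀ i : ℕ, (C i).map ψ = C (i + 1))
    (hF : F = A ⊔ ⨆ i : Fin (m + 1), C (i : ℕ)) (hU : L.map ψ ≤ F) (hLF : L ≤ F)
    (hfp : Function.Injective
      (Monoid.CoprodI.lift (fun o : Option ℕ => (o.elim A C).subtype)))
    (htop : A ⊔ (⨆ i : ℕ, C i) = ⊤) (a : A) :
    rho hψ hC hF hU hLF hfp htop (a : 𝔽) =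
      HNNExtension.of ⟨(a : 𝔽), hAF' hF a.2⟩ := by
  show (Monoid.CoprodI.lift _) ((bigIso hfp htop).symm ((a : 𝔽))) = _
  rw [bigIso_symm_of hfp htop none a]
  exact Monoid.CoprodI.lift_of _ _

theorem rho_C (hψ : Function.Injective ψ) (hC : ∀ i : ℕ, (C i).map ψ = C (i + 1))
    (hF : F = A ⊔ ⨆ i : Fin (m + 1), C (i : ℕ)) (hU : L.map ψ ≤ F) (hLF : L ≤ F)
    (hfp : Function.Injective
      (Monoid.CoprodI.lift (fun o : Option ℕ => (o.elim A C).subtype)))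
    (htop : A ⊔ (⨆ i : ℕ, C i) = ⊤) (i : ℕ) (c : C i) :
    rho hψ hC hF hU hLF hfp htop (c : 𝔽) = chi hψ hC hF hU hLF i c := by
  show (Monoid.CoprodI.lift _) ((bigIso hfp htop).symm ((c : 𝔽))) = _
  rw [bigIso_symm_of hfp htop (some i) c]
  exact Monoid.CoprodI.lift_of _ _

/-- extensionality on `𝔽` -/
theorem hom_ext_gen {K : Type*} [Group K] (htop : A ⊔ (⨆ i : ℕ, C i) = ⊤)
    {f g : 𝔽 →* K} (hA : ∀ a ∈ A, f a = g a) (hC : ∀ i : ℕ, ∀ c ∈ C i, f c = g c) :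
    f = g := by
  have h : A ⊔ ⨆ i, C i ≤ f.eqLocus g :=
    sup_le (fun a ha => hA a ha) (iSup_le fun i c hc => hC i c hc)
  rw [htop] at h
  ext x
  exact h (Subgroup.mem_top x)

/-- extensionality on `F` -/
theorem hom_ext_F {K : Type*} [Group K]
    (hF : F = A ⊔ ⨆ i : Fin (m + 1), C (i : ℕ))
    {f g : ↥F →* K}
    (hA : ∀ (a : 𝔽) (ha : a ∈ A), f ⟨a, hAF' hF ha⟩ = g ⟨a, hAF' hF ha⟩)
    (hC : ∀ (i : ℕ) (hi : i ≤ m) (c : 𝔽) (hc : c ∈ C i),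
      f ⟨c, hCF' hF hi hc⟩ = g ⟨c, hCF' hF hi hc⟩) : f = g := by
  have h : F ≤ (f.eqLocus g).map F.subtype := by
    refine le_trans (le_of_eq hF) (sup_le ?_ (iSup_le fun j => ?_))
    · intro a ha
      exact ⟨⟨a, hAF' hF ha⟩, hA a ha, rfl⟩
    · intro c hc
      exact ⟨⟨c, hCF' hF (Nat.le_of_lt_succ j.2) hc⟩,
        hC j (Nat.le_of_lt_succ j.2) c hc, rfl⟩
  ext x
  obtain ⟨y, hy, hyx⟩ := h x.2
  have : y = x := Subtype.ext hyx
  exact this ▸ hy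

variable (hψ : Function.Injective ψ) (hC : ∀ i : ℕ, (C i).map ψ = C (i + 1))
  (hF : F = A ⊔ ⨆ i : Fin (m + 1), C (i : ℕ)) (hL : L = A ⊔ ⨆ i : Fin m, C (i : ℕ))
  (hU : L.map ψ ≤ F) (hLF : L ≤ F) (hA : A.map ψ ≤ F)
  (hfp : Function.Injective
    (Monoid.CoprodI.lift (fun o : Option ℕ => (o.elim A C).subtype)))
  (htop : A ⊔ (⨆ i : ℕ, C i) = ⊤)

include hL in
theorem rho_F (x : ↥F) :
    rho hψ hC hF hU hLF hfp htop (x : 𝔽) = HNNExtension.of x := by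
  have h : (rho hψ hC hF hU hLF hfp htop).comp F.subtype = HNNExtension.of := by
    apply hom_ext_F hF
    · intro a ha
      exact rho_A hψ hC hF hU hLF hfp htop ⟨a, ha⟩
    · intro i hi c hc
      exact (rho_C hψ hC hF hU hLF hfp htop i ⟨c, hc⟩).trans
        (chi_le hψ hC hF hL hU hLF i hi ⟨c, hc⟩)
  exact DFunLike.congr_fun h x

include hL hA in
theorem rho_conj (f : 𝔽) :
    HNNExtension.t * rho hψ hC hF hU hLF hfp htop (ψ f) * HNNExtension.t⁻¹ =
      rho hψ hC hF hU hLF hfp htop f := by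
  have key : (MulAut.conj (HNNExtension.t :
        HNNExtension F ((L.map ψ).subgroupOf F) (L.subgroupOf F)
          (eIso hψ hU hLF))).toMonoidHom.comp
        ((rho hψ hC hF hU hLF hfp htop).comp ψ) = rho hψ hC hF hU hLF hfp htop := by
    apply hom_ext_gen htop
    · intro a ha
      show HNNExtension.t * rho hψ hC hF hU hLF hfp htop (ψ a) * HNNExtension.t⁻¹ = _
      have haF : ψ a ∈ F := hA (Subgroup.mem_map.mpr ⟨a, ha, rfl⟩)
      have hxa : (⟨ψ a, haF⟩ : F) ∈ (L.map ψ).subgroupOf F := by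
        rw [mem_subgroupOf]
        exact Subgroup.mem_map.mpr ⟨a, hAL' hL ha, rfl⟩
      have h1 : rho hψ hC hF hU hLF hfp htop (ψ a) = HNNExtension.of (⟨ψ a, haF⟩ : F) :=
        rho_F hψ hC hF hL hU hLF hfp htop ⟨ψ a, haF⟩
      rw [h1, ← HNNExtension.equiv_eq_conj (φ := eIso hψ hU hLF) ⟨⟨ψ a, haF⟩, hxa⟩]
      rw [rho_A hψ hC hF hU hLF hfp htop ⟨a, ha⟩]
      congr 1
      apply Subtype.ext
      apply hψ
      rw [eIso_spec hψ hU hLF]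
    · intro i c hc
      show HNNExtension.t * rho hψ hC hF hU hLF hfp htop (ψ c) * HNNExtension.t⁻¹ = _
      have hcC : ψ c ∈ C (i + 1) := by
        have : ψ c ∈ (C i).map ψ := Subgroup.mem_map_of_mem ψ hc
        rwa [hC i] at this
      have h1 : rho hψ hC hF hU hLF hfp htop (ψ c) =
          chi hψ hC hF hU hLF (i+1) ⟨ψ c, hcC⟩ :=
        rho_C hψ hC hF hU hLF hfp htop (i+1) ⟨ψ c, hcC⟩
      have hsy : (stepIso hψ hC i).symm ⟨ψ c, hcC⟩ = ⟨c, hc⟩ := by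
        rw [MulEquiv.symm_apply_eq]
        exact Subtype.ext (stepIso_coe hψ hC i ⟨c, hc⟩).symm
      rw [h1, chi_succ, hsy, rho_C hψ hC hF hU hLF hfp htop i ⟨c, hc⟩]
      group
  exact DFunLike.congr_fun key f

/-- the canonical homomorphism `F∗_φ → M(ψ)`. -/
noncomputable def theta :
    HNNExtension F ((L.map ψ).subgroupOf F) (L.subgroupOf F) (eIso hψ hU hLF) →*
      MappingTorus ψ hψ :=
  HNNExtension.lift ((MappingTorus.of ψ hψ).comp F.subtype) (MappingTorus.t ψ hψ)
    (by
      intro a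
      have h := MappingTorus.t_conj ψ hψ (((eIso hψ hU hLF a : F) : 𝔽))
      rw [eIso_spec hψ hU hLF a] at h
      exact h)

theorem theta_of (z : ↥F) :
    theta hψ hU hLF (HNNExtension.of z) = MappingTorus.of ψ hψ (z : 𝔽) :=
  HNNExtension.lift_of _ _ _ z

theorem theta_t : theta hψ hU hLF HNNExtension.t = MappingTorus.t ψ hψ :=
  HNNExtension.lift_t _ _ _

theorem theta_chi : ∀ (i : ℕ) (c : C i),
    theta hψ hU hLF (chi hψ hC hF hU hLF i c) = MappingTorus.of ψ hψ (c : 𝔽)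
  | 0, c => theta_of hψ hU hLF _
  | (i+1), c => by
    rw [chi_succ, map_mul, map_mul, map_inv, theta_t,
      theta_chi i ((stepIso hψ hC i).symm c)]
    rw [MappingTorus.inv_t_conj ψ hψ, stepIso_symm_coe hψ hC i c]

theorem theta_rho (f : 𝔽) :
    theta hψ hU hLF (rho hψ hC hF hU hLF hfp htop f) = MappingTorus.of ψ hψ f := by
  have key : (theta hψ hU hLF).comp (rho hψ hC hF hU hLF hfp htop) =
      MappingTorus.of ψ hψ := by
    apply hom_ext_gen htop
    · intro a ha
      show theta hψ hU hLF (rho hψ hC hF hU hLF hfp htop a) = _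
      rw [rho_A hψ hC hF hU hLF hfp htop ⟨a, ha⟩, theta_of]
    · intro i c hc
      show theta hψ hU hLF (rho hψ hC hF hU hLF hfp htop c) = _
      rw [rho_C hψ hC hF hU hLF hfp htop i ⟨c, hc⟩, theta_chi hψ hC hF hU hLF i ⟨c, hc⟩]
  exact DFunLike.congr_fun key f

/-- the inverse homomorphism `M(ψ) → F∗_φ`. -/
noncomputable def theta' :
    MappingTorus ψ hψ →*
      HNNExtension F ((L.map ψ).subgroupOf F) (L.subgroupOf F) (eIso hψ hU hLF) :=
  HNNExtension.lift (rho hψ hC hF hU hLF hfp htop) HNNExtension.t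
    (by
      intro a
      have hy : ψ (((((MonoidHom.ofInjective hψ).symm.trans Subgroup.topEquiv.symm) a :
          (⊤ : Subgroup 𝔽)) : 𝔽)) = (a : 𝔽) := MonoidHom.apply_ofInjective_symm hψ a
      conv_lhs => rw [← hy]
      have h := rho_conj hψ hC hF hL hU hLF hA hfp htop
        (((((MonoidHom.ofInjective hψ).symm.trans Subgroup.topEquiv.symm) a :
          (⊤ : Subgroup 𝔽)) : 𝔽))
      rw [← h]
      group)

theorem theta'_of (f : 𝔽) :
    theta' hψ hC hF hL hU hLF hA hfp htop (HNNExtension.of f) =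
      rho hψ hC hF hU hLF hfp htop f :=
  HNNExtension.lift_of _ _ _ f

theorem theta'_t :
    theta' hψ hC hF hL hU hLF hA hfp htop HNNExtension.t = HNNExtension.t :=
  HNNExtension.lift_t _ _ _

theorem theta'_theta :
    (theta' hψ hC hF hL hU hLF hA hfp htop).comp (theta hψ hU hLF) = MonoidHom.id _ := by
  apply HNNExtension.hom_ext
  · ext z
    show theta' hψ hC hF hL hU hLF hA hfp htop (theta hψ hU hLF (HNNExtension.of z)) = _
    rw [theta_of]
    exact (theta'_of hψ hC hF hL hU hLF hA hfp htop ((z : 𝔽))).trans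
      (rho_F hψ hC hF hL hU hLF hfp htop z)
  · show theta' hψ hC hF hL hU hLF hA hfp htop (theta hψ hU hLF HNNExtension.t) = _
    rw [theta_t]
    exact theta'_t hψ hC hF hL hU hLF hA hfp htop

theorem theta_theta' :
    (theta hψ hU hLF).comp (theta' hψ hC hF hL hU hLF hA hfp htop) = MonoidHom.id _ := by
  apply HNNExtension.hom_ext
  · ext f
    show theta hψ hU hLF (theta' hψ hC hF hL hU hLF hA hfp htop (HNNExtension.of f)) = _
    rw [theta'_of hψ hC hF hL hU hLF hA hfp htop f]
    exact theta_rho hψ hC hF hU hLF hfp htop f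
  · show theta hψ hU hLF (theta' hψ hC hF hL hU hLF hA hfp htop HNNExtension.t) = _
    rw [theta'_t hψ hC hF hL hU hLF hA hfp htop]
    exact theta_t hψ hU hLF

end Aux

/-- The HNN decomposition of a finitely generated mapping torus: if
`𝔽 = A ⋆ (⋆_{i≥0} C_i)` with `ψ(C_i) = C_{i+1}` and `ψ(A) ≤ F = A ⋆ C₀ ⋆ ⋯ ⋆ C_m`, then
with `L = A ⋆ C₀ ⋆ ⋯ ⋆ C_{m-1}` and `U = ψ(L)`, the canonical homomorphism from the HNN
extension `F∗_φ` (`φ : L → U` the restriction of `ψ`) to `M(ψ)`, restricting to the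
inclusion on `F` and matching stable letters, is an isomorphism. -/
theorem mappingTorus_iso_hnn
    {𝔽 : Type*} [Group 𝔽] [IsFreeGroup 𝔽]
    (A : Subgroup 𝔽) (C : ℕ → Subgroup 𝔽)
    (hfp : IsInternalFreeProduct (fun o : Option ℕ => o.elim A C))
    (htop : A ⊔ (⨆ i : ℕ, C i) = ⊤)
    (ψ : 𝔽 →* 𝔽) (hψ : Function.Injective ψ)
    (hC : ∀ i : ℕ, (C i).map ψ = C (i + 1))
    (m : ℕ) (F L : Subgroup 𝔽)
    (hF : F = A ⊔ ⨆ i : Fin (m + 1), C (i : ℕ))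
    (hL : L = A ⊔ ⨆ i : Fin m, C (i : ℕ))
    (hA : A.map ψ ≤ F) :
    ∃ e : ↥((L.map ψ).subgroupOf F) ≃* ↥(L.subgroupOf F),
      (∀ x : ↥((L.map ψ).subgroupOf F),
        ψ (((e x : ↥F) : 𝔽)) = ((x : ↥F) : 𝔽)) ∧
      ∃ θ : HNNExtension ↥F ((L.map ψ).subgroupOf F) (L.subgroupOf F) e →*
          MappingTorus ψ hψ,
        (∀ z : ↥F, θ (HNNExtension.of z) = MappingTorus.of ψ hψ (z : 𝔽)) ∧
        θ HNNExtension.t = MappingTorus.t ψ hψ ∧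
        Function.Bijective θ := by
  have hLF : L ≤ F := hLF' hF hL
  have hU : L.map ψ ≤ F := hUF' hC hF hL hA
  have hfp' : Function.Injective
      (Monoid.CoprodI.lift (fun o : Option ℕ => (o.elim A C).subtype)) := hfp
  refine ⟨eIso hψ hU hLF, eIso_spec hψ hU hLF, theta hψ hU hLF,
    theta_of hψ hU hLF, theta_t hψ hU hLF, ?_, ?_⟩
  · intro x y hxy
    have hx := DFunLike.congr_fun (theta'_theta hψ hC hF hL hU hLF hA hfp' htop) x
    have hy := DFunLike.congr_fun (theta'_theta hψ hC hF hL hU hLF hA hfp' htop) y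
    simp only [MonoidHom.comp_apply, MonoidHom.id_apply] at hx hy
    rw [← hx, ← hy, hxy]
  · intro x
    refine ⟨theta' hψ hC hF hL hU hLF hA hfp' htop x, ?_⟩
    have hx := DFunLike.congr_fun (theta_theta' hψ hC hF hL hU hLF hA hfp' htop) x
    simpa only [MonoidHom.comp_apply, MonoidHom.id_apply] using hx
end

section
/- Let Z₁ be a group, X₁ ≤ Z₁ a subgroup, ψ : X₁ → Z₁ an injective homomorphism, and let G = ⟨Z₁, t ∣ t⁻¹ x t = ψ(x) for all x ∈ X₁⟩ be the HNN extension of Z₁ with associated subgroups X₁ and ψ(X₁). Let Z₂ ≤ Z₁ be a subgroup, set X₂ = Z₂ ∩ X₁, and assume ψ(X₂) = Z₂ ∩ ψ(X₁). Then the canonical homomorphism from the HNN extension ⟨Z₂, s ∣ s⁻¹ x s = ψ(x) for all x ∈ X₂⟩ (of Z₂ with associated subgroups X₂ and ψ(X₂)) to G, restricting to the inclusion on Z₂ and sending s ↦ t, is injective; its image is the subgroup H = ⟨Z₂ ∪ {t}⟩ of G, and moreover Z₂ = H ∩ Z₁ and X₂ = H ∩ X₁. -/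
/-- The HNN extension `⟨Z, t ∣ t⁻¹ x t = ψ(x), ∀ x ∈ X⟩` of `Z` over an injective
homomorphism `ψ : X → Z` defined on a subgroup `X ≤ Z`, with associated subgroups
`ψ(X)` and `X`. -/
noncomputable abbrev HNNEndo {Z : Type*} [Group Z] (X : Subgroup Z) (ψ : ↥X →* Z)
    (hψ : Function.Injective ψ) : Type _ :=
  HNNExtension Z ψ.range X (MonoidHom.ofInjective hψ).symm

/-- The canonical embedding `Z →* HNNEndo X ψ hψ`. -/
noncomputable def HNNEndo.of {Z : Type*} [Group Z] (X : Subgroup Z) (ψ : ↥X →* Z)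
    (hψ : Function.Injective ψ) : Z →* HNNEndo X ψ hψ :=
  HNNExtension.of

/-- The stable letter of `HNNEndo X ψ hψ`; it satisfies `t⁻¹ (of x) t = of (ψ x)`. -/
noncomputable def HNNEndo.t {Z : Type*} [Group Z] (X : Subgroup Z) (ψ : ↥X →* Z)
    (hψ : Function.Injective ψ) : HNNEndo X ψ hψ :=
  HNNExtension.t

section InducedHNNAux

variable {Z₁ : Type*} [Group Z₁] (X₁ : Subgroup Z₁) (ψ : ↥X₁ →* Z₁) (Z₂ : Subgroup Z₁)

/-- The inclusion of `Z₂ ∩ X₁` (as a subgroup of `Z₂`) into `X₁`. -/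
def hnnAuxJ : ↥((Z₂ ⊓ X₁).subgroupOf Z₂) →* ↥X₁ where
  toFun x := ⟨((x : ↥Z₂) : Z₁), (Subgroup.mem_subgroupOf.mp x.2).2⟩
  map_one' := rfl
  map_mul' _ _ := rfl

theorem hnnAuxJ_mem (hint : Subgroup.map ψ ((Z₂ ⊓ X₁).subgroupOf X₁) = Z₂ ⊓ ψ.range)
    (x : ↥((Z₂ ⊓ X₁).subgroupOf Z₂)) : ψ (hnnAuxJ X₁ Z₂ x) ∈ Z₂ := by
  have h : ψ (hnnAuxJ X₁ Z₂ x) ∈ Subgroup.map ψ ((Z₂ ⊓ X₁).subgroupOf X₁) :=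
    ⟨hnnAuxJ X₁ Z₂ x, Subgroup.mem_subgroupOf.mpr (Subgroup.mem_subgroupOf.mp x.2), rfl⟩
  rw [hint] at h
  exact h.1

/-- The restriction of `ψ` to `Z₂ ∩ X₁`, as a homomorphism into `Z₂`. -/
def hnnAuxPsi (hint : Subgroup.map ψ ((Z₂ ⊓ X₁).subgroupOf X₁) = Z₂ ⊓ ψ.range) :
    ↥((Z₂ ⊓ X₁).subgroupOf Z₂) →* ↥Z₂ :=
  (ψ.comp (hnnAuxJ X₁ Z₂)).codRestrict Z₂ (hnnAuxJ_mem X₁ ψ Z₂ hint)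

@[simp]
theorem hnnAuxPsi_coe (hint : Subgroup.map ψ ((Z₂ ⊓ X₁).subgroupOf X₁) = Z₂ ⊓ ψ.range)
    (x : ↥((Z₂ ⊓ X₁).subgroupOf Z₂)) :
    ((hnnAuxPsi X₁ ψ Z₂ hint x : ↥Z₂) : Z₁) = ψ (hnnAuxJ X₁ Z₂ x) := rfl

end InducedHNNAux

/-- Induced HNN splittings of subgroups (Proposition 6.1 of the paper): let
`G = ⟨Z₁, t ∣ t⁻¹ x t = ψ(x), ∀ x ∈ X₁⟩`, let `Z₂ ≤ Z₁`, `X₂ = Z₂ ∩ X₁` and assume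
`ψ(X₂) = Z₂ ∩ ψ(X₁)`.  Then the canonical homomorphism
`⟨Z₂, s ∣ s⁻¹ x s = ψ(x), ∀ x ∈ X₂⟩ →* G` (restriction of the inclusion, `s ↦ t`) is
injective with image `H = ⟨Z₂, t⟩`, and `Z₂ = H ∩ Z₁`, `X₂ = H ∩ X₁`. -/
theorem induced_hnn_splitting
    {Z₁ : Type*} [Group Z₁] (X₁ : Subgroup Z₁) (ψ : ↥X₁ →* Z₁)
    (hψ : Function.Injective ψ) (Z₂ : Subgroup Z₁)
    (hint : Subgroup.map ψ ((Z₂ ⊓ X₁).subgroupOf X₁) = Z₂ ⊓ ψ.range) :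
    ∃ ψ₂ : ↥((Z₂ ⊓ X₁).subgroupOf Z₂) →* ↥Z₂,
      (∀ x : ↥((Z₂ ⊓ X₁).subgroupOf Z₂),
        ((ψ₂ x : ↥Z₂) : Z₁) =
          ψ ⟨((x : ↥Z₂) : Z₁), (Subgroup.mem_subgroupOf.mp x.2).2⟩) ∧
      ∃ (hψ₂ : Function.Injective ψ₂)
        (θ : HNNEndo ((Z₂ ⊓ X₁).subgroupOf Z₂) ψ₂ hψ₂ →* HNNEndo X₁ ψ hψ),
        (∀ z : ↥Z₂,
          θ (HNNEndo.of ((Z₂ ⊓ X₁).subgroupOf Z₂) ψ₂ hψ₂ z) =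
            HNNEndo.of X₁ ψ hψ (z : Z₁)) ∧
        θ (HNNEndo.t ((Z₂ ⊓ X₁).subgroupOf Z₂) ψ₂ hψ₂) = HNNEndo.t X₁ ψ hψ ∧
        Function.Injective θ ∧
        θ.range = Subgroup.closure
          ((HNNEndo.of X₁ ψ hψ) '' (Z₂ : Set Z₁) ∪ {HNNEndo.t X₁ ψ hψ}) ∧
        Subgroup.map (HNNEndo.of X₁ ψ hψ) Z₂ =
          θ.range ⊓ Subgroup.map (HNNEndo.of X₁ ψ hψ) ⊤ ∧
        Subgroup.map (HNNEndo.of X₁ ψ hψ) (Z₂ ⊓ X₁) =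
          θ.range ⊓ Subgroup.map (HNNEndo.of X₁ ψ hψ) X₁ := by
  classical
  set X₂ := (Z₂ ⊓ X₁).subgroupOf Z₂ with hX₂def
  set ψ₂ := hnnAuxPsi X₁ ψ Z₂ hint with hψ₂def
  have hψ₂ : Function.Injective ψ₂ := by
    intro a b hab
    have h1 : ψ (hnnAuxJ X₁ Z₂ a) = ψ (hnnAuxJ X₁ Z₂ b) := congrArg Subtype.val hab
    have h2 := hψ h1
    have h3 := congrArg Subtype.val h2
    exact Subtype.ext (Subtype.ext h3)
  set φ₁ := (MonoidHom.ofInjective hψ).symm with hφ₁def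
  set φ₂ := (MonoidHom.ofInjective hψ₂).symm with hφ₂def
  have F1 : ∀ x : ↥ψ.range, ψ (φ₁ x) = ↑x := fun x =>
    MonoidHom.apply_ofInjective_symm hψ x
  have F2 : ∀ x : ↥ψ₂.range, ψ₂ (φ₂ x) = ↑x := fun x =>
    MonoidHom.apply_ofInjective_symm hψ₂ x
  have E1 : ∀ z : ↥Z₂, ((z : Z₁) ∈ X₁ ↔ z ∈ X₂) := by
    intro z
    constructor
    · intro h; exact Subgroup.mem_subgroupOf.mpr ⟨z.2, h⟩
    · intro h; exact (Subgroup.mem_subgroupOf.mp h).2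
  have E2 : ∀ z : ↥Z₂, ((z : Z₁) ∈ ψ.range ↔ z ∈ ψ₂.range) := by
    intro z
    constructor
    · intro h
      have h' : (z : Z₁) ∈ Subgroup.map ψ ((Z₂ ⊓ X₁).subgroupOf X₁) := by
        rw [hint]; exact ⟨z.2, h⟩
      obtain ⟨x', hx', hx'2⟩ := h'
      have hmem := Subgroup.mem_subgroupOf.mp hx'
      refine ⟨⟨⟨(x' : Z₁), hmem.1⟩, Subgroup.mem_subgroupOf.mpr hmem⟩, ?_⟩
      apply Subtype.ext
      show ψ (hnnAuxJ X₁ Z₂ _) = (z : Z₁)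
      have : hnnAuxJ X₁ Z₂ ⟨⟨(x' : Z₁), hmem.1⟩, Subgroup.mem_subgroupOf.mpr hmem⟩ = x' :=
        Subtype.ext rfl
      rw [this, hx'2]
    · rintro ⟨x, rfl⟩
      exact ⟨hnnAuxJ X₁ Z₂ x, rfl⟩
  -- the commuting condition needed to define `θ` by the universal property
  have hx : ∀ a : ↥ψ₂.range,
      (HNNExtension.t : HNNEndo X₁ ψ hψ) *
        ((HNNExtension.of).comp Z₂.subtype) ↑a =
      ((HNNExtension.of).comp Z₂.subtype) ((φ₂ a : ↥X₂) : ↥Z₂) * HNNExtension.t := by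
    intro a
    have ha' : ((a : ↥Z₂) : Z₁) ∈ ψ.range := (E2 ↑a).mpr a.2
    have hconj := HNNExtension.t_mul_of (φ := φ₁) ⟨((a : ↥Z₂) : Z₁), ha'⟩
    have hj : hnnAuxJ X₁ Z₂ (φ₂ a) = φ₁ ⟨((a : ↥Z₂) : Z₁), ha'⟩ := by
      apply hψ
      rw [F1]
      show ((ψ₂ (φ₂ a) : ↥Z₂) : Z₁) = _
      rw [F2]
    have hcoe : (((φ₂ a : ↥X₂) : ↥Z₂) : Z₁) = ((φ₁ ⟨((a : ↥Z₂) : Z₁), ha'⟩ : ↥X₁) : Z₁) := by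
      rw [← hj]; rfl
    simpa [hcoe] using hconj
  set θ : HNNEndo X₂ ψ₂ hψ₂ →* HNNEndo X₁ ψ hψ :=
    HNNExtension.lift ((HNNExtension.of).comp Z₂.subtype) HNNExtension.t hx with hθdef
  have θ_of : ∀ z : ↥Z₂, θ (HNNExtension.of z) = HNNExtension.of (z : Z₁) := fun z =>
    HNNExtension.lift_of _ _ _ _
  have θ_t : θ HNNExtension.t = HNNExtension.t :=
    HNNExtension.lift_t _ _ _
  -- the key consequence of Britton's lemma
  have key : ∀ y : HNNEndo X₂ ψ₂ hψ₂,
      θ y ∈ (HNNExtension.of : Z₁ →* HNNEndo X₁ ψ hψ).range →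
      ∃ h : ↥Z₂, y = HNNExtension.of h := by
    intro y hy
    obtain ⟨d⟩ := (inferInstance : Nonempty (HNNExtension.NormalWord.TransversalPair ↥Z₂ ψ₂.range X₂))
    set w : HNNExtension.NormalWord d := y • HNNExtension.NormalWord.empty with hw
    have hwprod : w.prod φ₂ = y := by
      rw [hw, HNNExtension.NormalWord.prod_smul, HNNExtension.NormalWord.prod_empty, mul_one]
    set W : HNNExtension.NormalWord.ReducedWord Z₁ ψ.range X₁ :=
      { head := ↑w.head
        toList := w.toList.map (fun p => (p.1, ↑p.2))
        chain := by
          rw [List.isChain_map]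
          refine w.chain.imp ?_
          intro a b hab hmem
          apply hab
          rcases Int.units_eq_one_or a.1 with h | h <;> rw [h] at hmem ⊢
          · exact (E2 a.2).mp hmem
          · exact (E1 a.2).mp hmem } with hWdef
    have hWprod : W.prod φ₁ = θ y := by
      rw [← hwprod]
      show HNNExtension.of (W.head) *
          (W.toList.map (fun x => HNNExtension.t ^ (x.1 : ℤ) * HNNExtension.of x.2)).prod =
        θ (HNNExtension.of (w.head) *
          (w.toList.map (fun x => HNNExtension.t ^ (x.1 : ℤ) * HNNExtension.of x.2)).prod)
      rw [map_mul, map_list_prod, θ_of]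
      simp only [hWdef, List.map_map]
      congr 1
      refine congrArg _ (List.map_congr_left ?_)
      intro p hp
      show HNNExtension.t ^ (p.1 : ℤ) * HNNExtension.of (↑p.2 : Z₁) =
        θ (HNNExtension.t ^ (p.1 : ℤ) * HNNExtension.of p.2)
      rw [map_mul, map_zpow, θ_t, θ_of]
    rw [← hWprod] at hy
    have hnil : W.toList = [] :=
      HNNExtension.ReducedWord.toList_eq_nil_of_mem_of_range φ₁ W hy
    have hnil' : w.toList = [] := by
      have := hnil
      rw [hWdef] at this
      exact List.map_eq_nil_iff.mp this
    refine ⟨w.head, ?_⟩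
    rw [← hwprod]
    show _ = HNNExtension.of (w.head)
    rw [HNNExtension.NormalWord.ReducedWord.prod]
    show HNNExtension.of (w.head) *
        (w.toList.map (fun x => HNNExtension.t ^ (x.1 : ℤ) * HNNExtension.of x.2)).prod = _
    rw [hnil']
    simp
  have hθinj : Function.Injective θ := by
    rw [injective_iff_map_eq_one]
    intro y hy1
    obtain ⟨h, rfl⟩ := key y (by rw [hy1]; exact one_mem _)
    rw [θ_of] at hy1
    have h1 : (h : Z₁) = 1 := HNNExtension.of_injective (φ := φ₁)
      (show HNNExtension.of ((h : Z₁)) = HNNExtension.of (1 : Z₁) by rw [hy1, map_one])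
    have h2 : h = 1 := Subtype.ext (by rw [h1]; rfl)
    rw [h2, map_one]
  have hrange : θ.range = Subgroup.closure
      ((HNNExtension.of : Z₁ →* HNNEndo X₁ ψ hψ) '' (Z₂ : Set Z₁) ∪ {HNNExtension.t}) := by
    apply le_antisymm
    · rintro x ⟨y, rfl⟩
      induction y using HNNExtension.induction_on with
      | of g =>
        rw [θ_of]
        exact Subgroup.subset_closure (Or.inl ⟨↑g, g.2, rfl⟩)
      | t =>
        rw [θ_t]
        exact Subgroup.subset_closure (Or.inr rfl)
      | mul a b ha hb => rw [map_mul]; exact mul_mem ha hb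
      | inv a ha => rw [map_inv]; exact inv_mem ha
    · rw [Subgroup.closure_le]
      rintro x (⟨z, hz, rfl⟩ | rfl)
      · exact ⟨HNNExtension.of (⟨z, hz⟩ : ↥Z₂), θ_of _⟩
      · exact ⟨HNNExtension.t, θ_t⟩
  have hZ : Subgroup.map (HNNExtension.of : Z₁ →* HNNEndo X₁ ψ hψ) Z₂ =
      θ.range ⊓ Subgroup.map (HNNExtension.of : Z₁ →* HNNEndo X₁ ψ hψ) ⊤ := by
    apply le_antisymm
    · rintro x ⟨z, hz, rfl⟩
      exact ⟨⟨HNNExtension.of (⟨z, hz⟩ : ↥Z₂), θ_of _⟩, ⟨z, trivial, rfl⟩⟩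
    · rintro x ⟨⟨y, rfl⟩, hx2⟩
      obtain ⟨g, -, hg⟩ := hx2
      obtain ⟨h, rfl⟩ := key y ⟨g, hg⟩
      exact ⟨↑h, h.2, (θ_of h).symm⟩
  have hX : Subgroup.map (HNNExtension.of : Z₁ →* HNNEndo X₁ ψ hψ) (Z₂ ⊓ X₁) =
      θ.range ⊓ Subgroup.map (HNNExtension.of : Z₁ →* HNNEndo X₁ ψ hψ) X₁ := by
    apply le_antisymm
    · rintro x ⟨z, hz, rfl⟩
      exact ⟨⟨HNNExtension.of (⟨z, hz.1⟩ : ↥Z₂), θ_of _⟩, ⟨z, hz.2, rfl⟩⟩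
    · rintro x ⟨⟨y, rfl⟩, hx2⟩
      obtain ⟨g, hgmem, hg⟩ := hx2
      obtain ⟨h, rfl⟩ := key y ⟨g, hg⟩
      have hgh : g = ↑h := HNNExtension.of_injective (φ := φ₁)
        (show HNNExtension.of g = HNNExtension.of ((h : Z₁)) by rw [hg, θ_of])
      exact ⟨↑h, ⟨h.2, hgh ▸ hgmem⟩, (θ_of h).symm⟩
  exact ⟨ψ₂, fun x => rfl, hψ₂, θ, θ_of, θ_t, hθinj, hrange, hZ, hX⟩
end

section
/- Let F be a free group and let H be a finitely generated subgroup of F × ℤ. Let N = {1} × ℤ ≤ F × ℤ. Then H is isomorphic to the direct product (H / (H ∩ N)) × (H ∩ N); in particular, H is isomorphic to the direct product of a finitely generated free group and a subgroup of ℤ. -/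
/-- If a free group on `β` is finitely generated, then `β` is finite. -/
lemma finite_of_fg_freeGroup {β : Type*} (h : Group.FG (FreeGroup β)) : Finite β := by
  classical
  by_contra hinf
  rw [not_finite_iff_infinite] at hinf
  obtain ⟨S, hS⟩ := h.1
  set L : Finset β := S.biUnion (fun g => (g.toWord.map Prod.fst).toFinset) with hL
  obtain ⟨b, hb⟩ := Infinite.exists_notMem_finset L
  set f : β → Multiplicative ℤ := fun x => if x = b then Multiplicative.ofAdd (1 : ℤ) else 1
  set φ : FreeGroup β →* Multiplicative ℤ := FreeGroup.lift f with hφ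
  have key : ∀ x : FreeGroup β, φ x = 1 := by
    intro x
    have hx : x ∈ Subgroup.closure (S : Set (FreeGroup β)) := by rw [hS]; trivial
    induction hx using Subgroup.closure_induction with
    | mem g hg =>
      have : φ g = FreeGroup.lift f (FreeGroup.mk g.toWord) := by
        rw [FreeGroup.mk_toWord]
      rw [this, FreeGroup.lift_mk]
      apply List.prod_eq_one
      intro y hy
      simp only [List.mem_map] at hy
      obtain ⟨p, hp, rfl⟩ := hy
      have hpb : p.1 ≠ b := by
        intro hpb
        apply hb
        rw [hL]
        exact Finset.mem_biUnion.2 ⟨g, hg, List.mem_toFinset.2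
          (List.mem_map.2 ⟨p, hp, hpb⟩)⟩
      have hf1 : f p.1 = 1 := by simp [f, hpb]
      cases p.2 <;> simp [hf1]
    | one => simp
    | mul _ _ _ _ h1 h2 => simp [h1, h2]
    | inv _ _ h1 => simp [h1]
  have hb1 : φ (FreeGroup.of b) = Multiplicative.ofAdd (1 : ℤ) := by
    simp [hφ, f]
  rw [key] at hb1
  exact one_ne_zero (ofAdd_eq_one.1 hb1.symm)

/-- Every finitely generated subgroup `H` of `F × ℤ` (`F` a free group) decomposes as the
direct product `(H / (H ∩ N)) × (H ∩ N)` where `N = {1} × ℤ`; in particular `H` is the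
direct product of a finitely generated free group and a subgroup of `ℤ`. -/
theorem fg_subgroup_of_free_times_int
    {F : Type*} [Group F] [IsFreeGroup F]
    (H : Subgroup (F × Multiplicative ℤ)) (hH : H.FG) :
    ∃ _hn : ((H ⊓ (⊥ : Subgroup F).prod
        (⊤ : Subgroup (Multiplicative ℤ))).subgroupOf H).Normal,
      Nonempty (↥H ≃*
        (↥H ⧸ (H ⊓ (⊥ : Subgroup F).prod
            (⊤ : Subgroup (Multiplicative ℤ))).subgroupOf H) ×
        ↥((H ⊓ (⊥ : Subgroup F).prod
            (⊤ : Subgroup (Multiplicative ℤ))).subgroupOf H)) ∧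
      ∃ (B : Type) (_i : Group B), IsFreeGroup B ∧ Group.FG B ∧
        ∃ S : Subgroup (Multiplicative ℤ), Nonempty (↥H ≃* B × ↥S) := by
  set N : Subgroup (F × Multiplicative ℤ) :=
    (⊥ : Subgroup F).prod (⊤ : Subgroup (Multiplicative ℤ)) with hN
  set K : Subgroup H := (H ⊓ N).subgroupOf H with hKdef
  -- elements of K are central in H
  have hcent : ∀ k : H, k ∈ K → ∀ h : H, Commute k h := by
    rintro ⟨k, hkH⟩ hk ⟨h, hhH⟩
    rw [hKdef, Subgroup.mem_subgroupOf] at hk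
    have h1 : k.1 = 1 := by
      have := Subgroup.mem_prod.1 hk.2
      simpa using this.1
    have : Commute k h := by
      apply Prod.ext <;> simp [Commute, SemiconjBy, h1, mul_comm]
    exact Subtype.ext (by simpa [Commute, SemiconjBy] using this)
  have hn : K.Normal := by
    constructor
    intro n hn g
    have := (hcent n hn g).symm
    rw [Commute, SemiconjBy] at this
    rw [this]
    simpa using hn
  refine ⟨hn, ?_, ?_⟩
  · -- the projection to F
    set π : H →* F := (MonoidHom.fst F (Multiplicative ℤ)).comp H.subtype with hπ
    have hker : π.ker = K := by
      ext x
      simp [hπ, MonoidHom.mem_ker, hKdef, Subgroup.mem_subgroupOf, hN,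
        Subgroup.mem_prod, x.2]
    haveI : IsFreeGroup π.range := by infer_instance
    have eQ : (H ⧸ K) ≃* π.range :=
      (QuotientGroup.quotientMulEquivOfEq hker.symm).trans
        (QuotientGroup.quotientKerEquivRange π)
    haveI : IsFreeGroup (H ⧸ K) := IsFreeGroup.ofMulEquiv eQ.symm
    -- section of the quotient map
    set sgen : IsFreeGroup.Generators (H ⧸ K) → H :=
      fun i => (QuotientGroup.mk'_surjective K (IsFreeGroup.of i)).choose with hsgen
    set s : (H ⧸ K) →* H := IsFreeGroup.lift sgen with hs
    have hsec : ∀ q : H ⧸ K, QuotientGroup.mk' K (s q) = q := by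
      have : (QuotientGroup.mk' K).comp s = MonoidHom.id (H ⧸ K) := by
        apply IsFreeGroup.ext_hom
        intro a
        simp only [MonoidHom.comp_apply, MonoidHom.id_apply, hs, IsFreeGroup.lift_of]
        exact (QuotientGroup.mk'_surjective K (IsFreeGroup.of a)).choose_spec
      intro q
      exact DFunLike.congr_fun this q
    have comm : ∀ (q : H ⧸ K) (k : K), Commute (s q) (K.subtype k) :=
      fun q k => ((hcent k k.2 (s q))).symm
    set φ : (H ⧸ K) × K →* H := s.noncommCoprod K.subtype comm with hφ
    have hφ_apply : ∀ p : (H ⧸ K) × K, φ p = s p.1 * p.2 := fun p => rfl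
    have hbij : Function.Bijective φ := by
      constructor
      · rw [injective_iff_map_eq_one]
        rintro ⟨q, k⟩ h1
        rw [hφ_apply] at h1
        have hk1 : QuotientGroup.mk' K (k : H) = 1 := by
          rw [← MonoidHom.mem_ker, QuotientGroup.ker_mk' K]
          exact k.2
        have hq : q = 1 := by
          have := congrArg (QuotientGroup.mk' K) h1
          rw [map_mul, hsec, hk1, mul_one, map_one] at this
          exact this
        subst hq
        rw [map_one, one_mul] at h1
        exact Prod.ext rfl (Subtype.ext h1)
      · intro h
        set q := QuotientGroup.mk' K h with hq
        have hmem : (s q)⁻¹ * h ∈ K := by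
          have h1 : QuotientGroup.mk' K ((s q)⁻¹ * h) = 1 := by
            rw [map_mul, map_inv, hsec]; exact inv_mul_cancel q
          exact (QuotientGroup.eq_one_iff _).1 h1
        exact ⟨⟨q, ⟨(s q)⁻¹ * h, hmem⟩⟩, by
          rw [hφ_apply]; simp⟩
    exact ⟨(MulEquiv.ofBijective φ hbij).symm⟩
  · -- the second part
    set π : H →* F := (MonoidHom.fst F (Multiplicative ℤ)).comp H.subtype with hπ
    have hker : π.ker = K := by
      ext x
      simp [hπ, MonoidHom.mem_ker, hKdef, Subgroup.mem_subgroupOf, hN,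
        Subgroup.mem_prod, x.2]
    haveI : IsFreeGroup π.range := by infer_instance
    have eQ : (H ⧸ K) ≃* π.range :=
      (QuotientGroup.quotientMulEquivOfEq hker.symm).trans
        (QuotientGroup.quotientKerEquivRange π)
    haveI : IsFreeGroup (H ⧸ K) := IsFreeGroup.ofMulEquiv eQ.symm
    -- finitely generated
    haveI : Group.FG H := (Group.fg_iff_subgroup_fg H).2 hH
    haveI hQfg : Group.FG (H ⧸ K) :=
      Group.fg_of_surjective (QuotientGroup.mk'_surjective K)
    -- generators are finite
    haveI : Group.FG (FreeGroup (IsFreeGroup.Generators (H ⧸ K))) :=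
      Group.fg_of_surjective (f := (IsFreeGroup.toFreeGroup (G := H ⧸ K)).toMonoidHom)
        (IsFreeGroup.toFreeGroup (G := H ⧸ K)).surjective
    haveI : Finite (IsFreeGroup.Generators (H ⧸ K)) :=
      finite_of_fg_freeGroup ‹_›
    set n := Nat.card (IsFreeGroup.Generators (H ⧸ K))
    set B := FreeGroup (Fin n) with hB
    have eB : (H ⧸ K) ≃* B :=
      (IsFreeGroup.toFreeGroup (G := H ⧸ K)).trans
        (FreeGroup.freeGroupCongr (Finite.equivFin _))
    -- K is isomorphic to a subgroup of Multiplicative ℤ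
    set ψ : K →* Multiplicative ℤ :=
      (MonoidHom.snd F (Multiplicative ℤ)).comp (H.subtype.comp K.subtype) with hψ
    have hψinj : Function.Injective ψ := by
      rw [injective_iff_map_eq_one]
      rintro ⟨⟨k, hkH⟩, hk⟩ h1
      rw [hKdef, Subgroup.mem_subgroupOf] at hk
      have h2 : k.1 = 1 := by
        have := Subgroup.mem_prod.1 hk.2
        simpa using this.1
      have h3 : k.2 = 1 := h1
      exact Subtype.ext (Subtype.ext (Prod.ext h2 h3))
    have eK : K ≃* ψ.range := MonoidHom.ofInjective hψinj
    -- assemble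
    have main : Nonempty (↥H ≃* (H ⧸ K) × K) := by
      -- reproduce the splitting
      set sgen : IsFreeGroup.Generators (H ⧸ K) → H :=
        fun i => (QuotientGroup.mk'_surjective K (IsFreeGroup.of i)).choose with hsgen
      set s : (H ⧸ K) →* H := IsFreeGroup.lift sgen with hs
      have hsec : ∀ q : H ⧸ K, QuotientGroup.mk' K (s q) = q := by
        have : (QuotientGroup.mk' K).comp s = MonoidHom.id (H ⧸ K) := by
          apply IsFreeGroup.ext_hom
          intro a
          simp only [MonoidHom.comp_apply, MonoidHom.id_apply, hs, IsFreeGroup.lift_of]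
          exact (QuotientGroup.mk'_surjective K (IsFreeGroup.of a)).choose_spec
        intro q
        exact DFunLike.congr_fun this q
      have comm : ∀ (q : H ⧸ K) (k : K), Commute (s q) (K.subtype k) :=
        fun q k => ((hcent k k.2 (s q))).symm
      set φ : (H ⧸ K) × K →* H := s.noncommCoprod K.subtype comm with hφ
      have hφ_apply : ∀ p : (H ⧸ K) × K, φ p = s p.1 * p.2 := fun p => rfl
      have hbij : Function.Bijective φ := by
        constructor
        · rw [injective_iff_map_eq_one]
          rintro ⟨q, k⟩ h1
          rw [hφ_apply] at h1
          have hk1 : QuotientGroup.mk' K (k : H) = 1 := by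
            rw [← MonoidHom.mem_ker, QuotientGroup.ker_mk' K]
            exact k.2
          have hq : q = 1 := by
            have := congrArg (QuotientGroup.mk' K) h1
            rw [map_mul, hsec, hk1, mul_one, map_one] at this
            exact this
          subst hq
          rw [map_one, one_mul] at h1
          exact Prod.ext rfl (Subtype.ext h1)
        · intro h
          set q := QuotientGroup.mk' K h with hq
          have hmem : (s q)⁻¹ * h ∈ K := by
            have h1 : QuotientGroup.mk' K ((s q)⁻¹ * h) = 1 := by
              rw [map_mul, map_inv, hsec]; exact inv_mul_cancel q
            exact (QuotientGroup.eq_one_iff _).1 h1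
          exact ⟨⟨q, ⟨(s q)⁻¹ * h, hmem⟩⟩, by
            rw [hφ_apply]; simp⟩
      exact ⟨(MulEquiv.ofBijective φ hbij).symm⟩
    obtain ⟨e1⟩ := main
    refine ⟨B, inferInstance, inferInstance, ?_, ψ.range,
      ⟨e1.trans (MulEquiv.prodCongr eB eK)⟩⟩
    exact Group.fg_of_surjective (f := eB.toMonoidHom) eB.surjective
end

section
/- Let F be a finitely generated free group and let ψ be an automorphism of F such that ψ^k is an inner automorphism of F for some integer k ≥ 1. Then the semidirect product F ⋊_ψ ℤ contains a finite-index subgroup isomorphic to F × ℤ. -/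
open SemidirectProduct Subgroup

/-- If `ψ` is an automorphism of a finitely generated free group `F` with `ψᵏ` inner for
some `k ≥ 1`, then the semidirect product `F ⋊_ψ ℤ` contains a finite-index subgroup
isomorphic to `F × ℤ`. -/
theorem semidirect_virtually_product
    {F : Type*} [Group F] [IsFreeGroup F] [Group.FG F] (ψ : MulAut F)
    (k : ℕ) (hk : 1 ≤ k) (c : F) (hinner : ∀ x : F, (ψ ^ k) x = c * x * c⁻¹) :
    ∃ K : Subgroup (F ⋊[zpowersHom (MulAut F) ψ] Multiplicative ℤ),
      K.index ≠ 0 ∧ Nonempty (↥K ≃* F × Multiplicative ℤ) := by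
  set G := F ⋊[zpowersHom (MulAut F) ψ] Multiplicative ℤ with hG
  set z : G := ⟨c⁻¹, Multiplicative.ofAdd (k : ℤ)⟩ with hz
  have hzright : z.right = Multiplicative.ofAdd (k : ℤ) := rfl
  have hcomm : ∀ x : F, Commute (inl x : G) z := by
    intro x
    have : (zpowersHom (MulAut F) ψ (Multiplicative.ofAdd (k : ℤ))) x = c * x * c⁻¹ := by
      simpa using hinner x
    refine SemidirectProduct.ext ?_ ?_
    · simp [hz, SemidirectProduct.mul_left, this]
      rw [hinner]
      group
    · simp [SemidirectProduct.mul_right]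
  let φ : F × Multiplicative ℤ →* G :=
    MonoidHom.noncommCoprod inl (zpowersHom G z)
      (fun m n => Commute.zpow_right (hcomm m) _)
  have hφ : ∀ p : F × Multiplicative ℤ, φ p = inl p.1 * z ^ p.2.toAdd := fun p => rfl
  have hright : ∀ p : F × Multiplicative ℤ,
      rightHom (φ p) = Multiplicative.ofAdd (p.2.toAdd * (k : ℤ)) := by
    intro p
    rw [hφ]
    simp only [map_mul, map_zpow, rightHom_inl, one_mul]
    rfl
  have hinj : Function.Injective φ := by
    intro p q hpq
    have h2 : p.2 = q.2 := by
      have := congrArg rightHom hpq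
      rw [hright, hright] at this
      have hk' : (k : ℤ) ≠ 0 := by exact_mod_cast Nat.one_le_iff_ne_zero.mp hk
      have := Multiplicative.ofAdd.injective this
      have := mul_right_cancel₀ hk' this
      exact Multiplicative.toAdd.injective this
    have h1 : p.1 = q.1 := by
      have := hpq
      rw [hφ, hφ, h2] at this
      exact inl_injective (mul_right_cancel this)
    exact Prod.ext h1 h2
  refine ⟨φ.range, ?_, ⟨(MonoidHom.ofInjective hinj).symm⟩⟩
  -- compute the range as a comap, hence the index
  have hrange : φ.range =
      (Subgroup.zpowers (Multiplicative.ofAdd (k : ℤ))).comap (rightHom : G →* _) := by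
    apply le_antisymm
    · rintro g ⟨p, rfl⟩
      rw [Subgroup.mem_comap, hright, Subgroup.mem_zpowers_iff]
      exact ⟨p.2.toAdd, by rw [← ofAdd_zsmul, smul_eq_mul, mul_comm]⟩
    · intro g hg
      rw [Subgroup.mem_comap, Subgroup.mem_zpowers_iff] at hg
      obtain ⟨n, hn⟩ := hg
      have hzn : (z ^ n).right = g.right := by
        have h1 : rightHom (z ^ n) = (Multiplicative.ofAdd (k : ℤ)) ^ n := by
          rw [map_zpow]; rfl
        rw [rightHom_eq_right] at h1
        rw [h1, hn]
        rfl
      refine ⟨(g.left * ((z ^ n).left)⁻¹, Multiplicative.ofAdd n), ?_⟩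
      rw [hφ]
      refine SemidirectProduct.ext ?_ ?_
      · rw [SemidirectProduct.mul_left, left_inl, right_inl, map_one]
        simp
      · rw [SemidirectProduct.mul_right, right_inl, one_mul]
        exact hzn
  rw [hrange, Subgroup.index_comap_of_surjective _ rightHom_surjective]
  have : Subgroup.zpowers (Multiplicative.ofAdd (k : ℤ)) =
      AddSubgroup.toSubgroup (AddSubgroup.zmultiples (k : ℤ)) := by
    have key : ∀ n : ℤ, (Multiplicative.ofAdd (k : ℤ)) ^ n =
        Multiplicative.ofAdd (n • (k : ℤ)) := fun n => (ofAdd_zsmul n _).symm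
    ext x
    rw [Subgroup.mem_zpowers_iff]
    constructor
    · rintro ⟨n, rfl⟩
      exact ⟨n, by rw [key n]; rfl⟩
    · rintro ⟨n, hn⟩
      exact ⟨n, by rw [key n]; exact congrArg Multiplicative.ofAdd hn⟩
  rw [this, AddSubgroup.index_toSubgroup, Int.index_zmultiples]
  simpa using Nat.one_le_iff_ne_zero.mp hk
end
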